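/- arXiv:1103.0067 — 9 statements merged into one kernel-verified Lean document; each statement's English description precedes it below -/
import Mathlib

section
/- If G is a C_k-semisaturated graph on n ≥ k vertices with k ≥ 5, and x₁, x₂ are distinct vertices of degree 1 in G, then their (unique) neighbors are distinct. -/
open SimpleGraph

/-- `G` contains a cycle of length `k`. -/
def hasCycleLength {V : Type*} (G : SimpleGraph V) (k : ℕ) : Prop :=
  ∃ (v : V) (c : G.Walk v v), c.IsCycle ∧ c.length = k

/-- The graph `G` together with the extra edge `uv`. -/
def addEdge {V : Type*} (G : SimpleGraph V) (u v : V) : SimpleGraph V :=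
  G ⊔ SimpleGraph.fromEdgeSet {s(u, v)}

/-- `G` is `C_k`-semisaturated: adding any non-edge `uv` creates a new `k`-cycle,
i.e. a `k`-cycle through the edge `uv`. -/
def IsCkSemisaturated {V : Type*} (k : ℕ) (G : SimpleGraph V) : Prop :=
  ∀ u v : V, u ≠ v → ¬ G.Adj u v →
    ∃ (w : V) (c : (addEdge G u v).Walk w w),
      c.IsCycle ∧ c.length = k ∧ s(u, v) ∈ c.edges

/-- `G` is `C_k`-saturated: it has no `k`-cycle, but adding any non-edge creates one. -/
def IsCkSaturated {V : Type*} (k : ℕ) (G : SimpleGraph V) : Prop :=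
  ¬ hasCycleLength G k ∧
    ∀ u v : V, u ≠ v → ¬ G.Adj u v → hasCycleLength (addEdge G u v) k

/-- A path from a vertex to itself is nil. -/
lemma path_loop_nil {V : Type*} {H : SimpleGraph V} {u : V} {r : H.Walk u u}
    (hr : r.IsPath) : r = SimpleGraph.Walk.nil := by
  cases r with
  | nil => rfl
  | cons h s =>
    exfalso
    rw [SimpleGraph.Walk.cons_isPath_iff] at hr
    exact hr.2 s.end_mem_support

theorem stmt_0 {V : Type*} [Fintype V] (G : SimpleGraph V) [DecidableRel G.Adj]
    (n k : ℕ) (hn : Fintype.card V = n) (hkn : k ≤ n) (hk : 5 ≤ k)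
    (hsat : IsCkSemisaturated k G)
    (x₁ x₂ y₁ y₂ : V) (hx : x₁ ≠ x₂)
    (hd1 : G.degree x₁ = 1) (hd2 : G.degree x₂ = 1)
    (hy1 : G.Adj x₁ y₁) (hy2 : G.Adj x₂ y₂) :
    y₁ ≠ y₂ := by
  classical
  intro hyy
  rw [← hyy] at hy2
  -- unique neighbors
  have huniq1 : ∀ z, G.Adj x₁ z → z = y₁ := by
    intro z hz
    have h1 : (G.neighborFinset x₁).card ≤ 1 := by
      rw [G.card_neighborFinset_eq_degree, hd1]
    rw [Finset.card_le_one] at h1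
    exact h1 z ((G.mem_neighborFinset _ _).mpr hz) y₁ ((G.mem_neighborFinset _ _).mpr hy1)
  have huniq2 : ∀ z, G.Adj x₂ z → z = y₁ := by
    intro z hz
    have h2 : (G.neighborFinset x₂).card ≤ 1 := by
      rw [G.card_neighborFinset_eq_degree, hd2]
    rw [Finset.card_le_one] at h2
    exact h2 z ((G.mem_neighborFinset _ _).mpr hz) y₁ ((G.mem_neighborFinset _ _).mpr hy2)
  have hx1y : x₁ ≠ y₁ := G.ne_of_adj hy1
  have hx2y : x₂ ≠ y₁ := G.ne_of_adj hy2
  -- x₁ x₂ is a non-edge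
  have hnadj : ¬ G.Adj x₁ x₂ := fun h => hx2y.symm (huniq1 x₂ h).symm
  -- neighbors in the augmented graph
  have hA1 : ∀ z, (addEdge G x₁ x₂).Adj x₁ z → z = y₁ ∨ z = x₂ := by
    intro z hz
    simp only [addEdge, sup_adj, fromEdgeSet_adj, Set.mem_singleton_iff] at hz
    rcases hz with hz | ⟨hz, hne⟩
    · exact Or.inl (huniq1 z hz)
    · rw [Sym2.eq_iff] at hz
      rcases hz with ⟨-, rfl⟩ | ⟨h1, -⟩
      · exact Or.inr rfl
      · exact absurd h1 hx
  have hA2 : ∀ z, (addEdge G x₁ x₂).Adj x₂ z → z = y₁ ∨ z = x₁ := by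
    intro z hz
    simp only [addEdge, sup_adj, fromEdgeSet_adj, Set.mem_singleton_iff] at hz
    rcases hz with hz | ⟨hz, hne⟩
    · exact Or.inl (huniq2 z hz)
    · rw [Sym2.eq_iff] at hz
      rcases hz with ⟨h1, -⟩ | ⟨-, rfl⟩
      · exact absurd h1.symm hx
      · exact Or.inr rfl
  -- get the cycle
  obtain ⟨w, c, hc, hlen, he⟩ := hsat x₁ x₂ hx hnadj
  have hx1mem : x₁ ∈ c.support := c.fst_mem_support_of_mem_edges he
  have hc₀ : (c.rotate x₁ hx1mem).IsCycle := hc.rotate hx1mem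
  have hrot := c.rotate_edges x₁ hx1mem
  have hlen₀ : (c.rotate x₁ hx1mem).length = k := by
    have := hrot.perm.length_eq
    rw [SimpleGraph.Walk.length_edges, SimpleGraph.Walk.length_edges] at this
    rw [this, hlen]
  have he₀ : s(x₁, x₂) ∈ (c.rotate x₁ hx1mem).edges := hrot.mem_iff.mpr he
  set c₀ := c.rotate x₁ hx1mem with hc₀def
  clear_value c₀
  clear hc₀def hrot hlen he hc hx1mem
  cases c₀ with
  | nil => exact hc₀.ne_nil rfl
  | cons h₁ p₁ =>
    rename_i b
    rw [SimpleGraph.Walk.cons_isCycle_iff] at hc₀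
    obtain ⟨hp₁, hep₁⟩ := hc₀
    have hlp₁ : p₁.length = k - 1 := by
      simp only [SimpleGraph.Walk.length_cons] at hlen₀; omega
    rcases hA1 b h₁ with rfl | rfl
    · -- first step goes to y₁; the edge s(x₁,x₂) is inside p₁
      have he₁ : s(x₁, x₂) ∈ p₁.edges := by
        simp only [SimpleGraph.Walk.edges_cons, List.mem_cons] at he₀
        rcases he₀ with h | h
        · rw [Sym2.eq_iff] at h
          rcases h with ⟨-, h⟩ | ⟨h, -⟩
          · exact absurd h hx2y
          · exact absurd h hx1y
        · exact h
      -- look at p₁.reverse : Walk x₁ y₁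
      have hp₁r : p₁.reverse.IsPath := hp₁.reverse
      have he₁r : s(x₁, x₂) ∈ p₁.reverse.edges := by
        rw [SimpleGraph.Walk.edges_reverse, List.mem_reverse]; exact he₁
      have hlr : p₁.reverse.length = k - 1 := by
        rw [SimpleGraph.Walk.length_reverse, hlp₁]
      cases hpr : p₁.reverse with
      | nil => rw [hpr] at hlr; simp at hlr; omega
      | cons h₃ r =>
        rename_i b₃
        rw [hpr] at hp₁r he₁r hlr
        rw [SimpleGraph.Walk.cons_isPath_iff] at hp₁r
        obtain ⟨hr, hx1r⟩ := hp₁r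
        have hb₃ : b₃ = x₂ := by
          simp only [SimpleGraph.Walk.edges_cons, List.mem_cons] at he₁r
          rcases he₁r with h | h
          · rw [Sym2.eq_iff] at h
            rcases h with ⟨-, h⟩ | ⟨-, h⟩
            · exact h.symm
            · exact absurd h.symm hx
          · exact absurd (r.fst_mem_support_of_mem_edges h) hx1r
        subst hb₃
        -- r : Walk x₂ y₁, path, x₁ ∉ r.support, length k - 2 ≥ 3
        have hlr' : r.length = k - 2 := by
          simp only [SimpleGraph.Walk.length_cons] at hlr; omega
        cases r with
        | nil => simp at hlr'; omega
        | cons h₄ s =>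
          rename_i z
          rw [SimpleGraph.Walk.cons_isPath_iff] at hr
          rcases hA2 z h₄ with rfl | rfl
          · -- z = y₁ : s is a path from y₁ to y₁ of positive length
            have := path_loop_nil hr.1
            subst this
            simp only [SimpleGraph.Walk.length_cons, SimpleGraph.Walk.length_nil] at hlr'
            omega
          · -- z = x₁ : but x₁ ∉ r.support
            exact hx1r (by
              simp only [SimpleGraph.Walk.support_cons, List.mem_cons]
              exact Or.inr s.start_mem_support)
    · -- first step goes to x₂ : p₁ : Walk x₂ x₁
      have hlp₁5 : 4 ≤ p₁.length := by omega
      cases p₁ with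
      | nil => simp at hlp₁5
      | cons h₂ q =>
        rename_i z
        rw [SimpleGraph.Walk.cons_isPath_iff] at hp₁
        obtain ⟨hq, hx2q⟩ := hp₁
        have hlq : q.length = k - 2 := by
          simp only [SimpleGraph.Walk.length_cons] at hlp₁; omega
        rcases hA2 z h₂ with rfl | rfl
        · -- z = y₁ ; q : Walk y₁ x₁, path; look at q.reverse : Walk x₁ y₁
          have hqr : q.reverse.IsPath := hq.reverse
          have hlqr : q.reverse.length = k - 2 := by
            rw [SimpleGraph.Walk.length_reverse, hlq]
          cases hqq : q.reverse with
          | nil => rw [hqq] at hlqr; simp at hlqr; omega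
          | cons h₃ r =>
            rename_i b₃
            rw [hqq] at hqr hlqr
            have hlqr' : r.length = k - 3 := by
              simp only [SimpleGraph.Walk.length_cons] at hlqr; omega
            rw [SimpleGraph.Walk.cons_isPath_iff] at hqr
            obtain ⟨hr, hx1r⟩ := hqr
            rcases hA1 b₃ h₃ with rfl | hb₃
            · -- b₃ = y₁ : r path from y₁ to y₁ of positive length
              have := path_loop_nil hr
              subst this
              simp only [SimpleGraph.Walk.length_nil] at hlqr'
              omega
            · -- b₃ = x₂ : but x₂ ∉ q.support
              have hmem : b₃ ∈ q.reverse.support := by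
                rw [hqq]
                simp only [SimpleGraph.Walk.support_cons, List.mem_cons]
                exact Or.inr r.start_mem_support
              rw [SimpleGraph.Walk.support_reverse, List.mem_reverse] at hmem
              exact hx2q (hb₃ ▸ hmem)
        · -- z = x₁ : q path from x₁ to x₁ of positive length
          have := path_loop_nil hq
          subst this
          simp only [SimpleGraph.Walk.length_nil] at hlq
          omega
end

section
/- If G is a C_k-semisaturated graph on n ≥ k vertices with k ≥ 5, and x is a vertex of degree 1 in G with neighbor y, then y has degree at least 3 in G. -/
open SimpleGraph

section Aux
variable {V : Type*} {G : SimpleGraph V}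

lemma aux_path_start_unique {u v a b : V} {q : G.Walk u v} (hq : q.IsPath)
    (ha : s(u, a) ∈ q.edges) (hb : s(u, b) ∈ q.edges) : a = b := by
  cases q with
  | nil => simp at ha
  | @cons _ c _ h r =>
    rw [SimpleGraph.Walk.cons_isPath_iff] at hq
    rw [SimpleGraph.Walk.edges_cons, List.mem_cons] at ha hb
    rcases ha with ha | ha
    · rcases hb with hb | hb
      · rw [Sym2.congr_right] at ha hb; rw [ha, hb]
      · exact absurd (r.fst_mem_support_of_mem_edges hb) hq.2
    · exact absurd (r.fst_mem_support_of_mem_edges ha) hq.2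

lemma aux_unique_base {v a b d : V} {p : G.Walk v v} (hp : p.IsCycle)
    (ha : s(v, a) ∈ p.edges) (hb : s(v, b) ∈ p.edges) (hd : s(v, d) ∈ p.edges) :
    a = b ∨ a = d ∨ b = d := by
  cases p with
  | nil => exact absurd hp SimpleGraph.Walk.IsCycle.not_of_nil
  | @cons _ c _ h q =>
    rw [SimpleGraph.Walk.cons_isCycle_iff] at hp
    have key : ∀ e, s(v, e) ∈ (SimpleGraph.Walk.cons h q).edges →
        e = c ∨ s(v, e) ∈ q.edges := by
      intro e he
      rw [SimpleGraph.Walk.edges_cons, List.mem_cons] at he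
      rcases he with he | he
      · exact Or.inl (Sym2.congr_right.mp he)
      · exact Or.inr he
    have uniq : ∀ e f, s(v, e) ∈ q.edges → s(v, f) ∈ q.edges → e = f := by
      intro e f he hf
      refine aux_path_start_unique hp.1.reverse ?_ ?_ <;>
        rw [SimpleGraph.Walk.edges_reverse, List.mem_reverse] <;> assumption
    rcases key a ha with rfl | ha' <;> rcases key b hb with rfl | hb' <;>
      rcases key d hd with rfl | hd'
    · exact Or.inl rfl
    · exact Or.inl rfl
    · exact Or.inr (Or.inl rfl)
    · exact Or.inr (Or.inr (uniq b d hb' hd'))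
    · exact Or.inr (Or.inr rfl)
    · exact Or.inr (Or.inl (uniq a d ha' hd'))
    · exact Or.inl (uniq a b ha' hb')
    · exact Or.inl (uniq a b ha' hb')

lemma aux_two_base {v : V} {p : G.Walk v v} (hp : p.IsCycle) :
    ∃ a b, a ≠ b ∧ s(v, a) ∈ p.edges ∧ s(v, b) ∈ p.edges := by
  cases p with
  | nil => exact absurd hp SimpleGraph.Walk.IsCycle.not_of_nil
  | @cons _ c _ h q =>
    have h3 := hp.three_le_length
    rw [SimpleGraph.Walk.length_cons] at h3
    rw [SimpleGraph.Walk.cons_isCycle_iff] at hp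
    have hnn : ¬ q.reverse.Nil := by
      rw [SimpleGraph.Walk.nil_iff_length_eq, SimpleGraph.Walk.length_reverse]
      omega
    obtain ⟨b, hb, r, hr⟩ := SimpleGraph.Walk.not_nil_iff.mp hnn
    have hbe : s(v, b) ∈ q.edges := by
      rw [← List.mem_reverse, ← SimpleGraph.Walk.edges_reverse, hr,
        SimpleGraph.Walk.edges_cons]
      exact List.mem_cons_self
    refine ⟨c, b, ?_, List.mem_cons_self, List.mem_cons_of_mem _ hbe⟩
    rintro rfl
    exact hp.2 hbe

lemma aux_two [DecidableEq V] {u v : V} {p : G.Walk u u} (hp : p.IsCycle)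
    (hv : v ∈ p.support) :
    ∃ a b, a ≠ b ∧ s(v, a) ∈ p.edges ∧ s(v, b) ∈ p.edges := by
  obtain ⟨a, b, hab, ha, hb⟩ := aux_two_base (hp.rotate hv)
  exact ⟨a, b, hab, (p.rotate_edges _ hv).mem_iff.mp ha, (p.rotate_edges _ hv).mem_iff.mp hb⟩

lemma aux_unique [DecidableEq V] {u v a b d : V} {p : G.Walk u u} (hp : p.IsCycle)
    (hv : v ∈ p.support)
    (ha : s(v, a) ∈ p.edges) (hb : s(v, b) ∈ p.edges) (hd : s(v, d) ∈ p.edges) :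
    a = b ∨ a = d ∨ b = d := by
  refine aux_unique_base (hp.rotate hv) ?_ ?_ ?_ <;>
    rw [(p.rotate_edges _ hv).mem_iff] <;> assumption

lemma walk_mem {W : Type*} {H : SimpleGraph W} {S : Set W}
    (hS : ∀ a b, a ∈ S → H.Adj a b → b ∈ S) :
    ∀ {a b : W} (p : H.Walk a b), a ∈ S → b ∈ S := by
  intro a b p
  induction p with
  | nil => exact id
  | cons hadj q ih => exact fun ha => ih (hS _ _ ha hadj)

lemma cycle_edge_cases {u v w a b : V}
    {c : (addEdge G u v).Walk w w} (h : s(a, b) ∈ c.edges) :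
    G.Adj a b ∨ s(a, b) = s(u, v) := by
  have := c.edges_subset_edgeSet h
  rw [SimpleGraph.mem_edgeSet, addEdge, sup_adj, fromEdgeSet_adj,
    Set.mem_singleton_iff] at this
  tauto

end Aux

theorem stmt_1 {V : Type*} [Fintype V] (G : SimpleGraph V) [DecidableRel G.Adj]
    (n k : ℕ) (hn : Fintype.card V = n) (hkn : k ≤ n) (hk : 5 ≤ k)
    (hsat : IsCkSemisaturated k G)
    (x y : V) (hd : G.degree x = 1) (hxy : G.Adj x y) :
    3 ≤ G.degree y := by
  classical
  by_contra hlt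
  push_neg at hlt
  -- x's unique neighbor is y
  have hux : ∀ a, G.Adj x a → a = y := by
    intro a haa
    obtain ⟨t, ht⟩ := Finset.card_eq_one.mp (hd : (G.neighborFinset x).card = 1)
    have h1 : a ∈ G.neighborFinset x := (G.mem_neighborFinset x a).mpr haa
    have h2 : y ∈ G.neighborFinset x := (G.mem_neighborFinset x y).mpr hxy
    rw [ht, Finset.mem_singleton] at h1 h2
    rw [h1, h2]
  have hxyne : x ≠ y := hxy.ne
  -- find z outside {x, y}
  have hz : ∃ z, z ≠ x ∧ z ≠ y := by
    have h3 : 2 < Fintype.card V := by omega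
    have hle : ({x, y} : Finset V).card ≤ 2 :=
      (Finset.card_insert_le _ _).trans (by simp)
    have hpos : 0 < ({x, y}ᶜ : Finset V).card := by
      rw [Finset.card_compl]; omega
    obtain ⟨z, hzc⟩ := Finset.card_pos.mp hpos
    have hzm : z ∉ ({x, y} : Finset V) := Finset.mem_compl.mp hzc
    refine ⟨z, ?_, ?_⟩ <;> simp only [Finset.mem_insert, Finset.mem_singleton,
      not_or] at hzm
    · exact hzm.1
    · exact hzm.2
  obtain ⟨z, hzx, hzy⟩ := hz
  -- first cycle: add edge x z
  have hnadj : ¬ G.Adj x z := fun h => hzy (hux z h)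
  obtain ⟨w0, c, hc, hclen, hce⟩ := hsat x z hzx.symm hnadj
  have hxs : x ∈ c.support := c.fst_mem_support_of_mem_edges hce
  -- the other edge of c at x is x-y
  have hxye : s(x, y) ∈ c.edges := by
    obtain ⟨a1, a2, h12, he1, he2⟩ := aux_two hc hxs
    have pick : ∃ a, a ≠ z ∧ s(x, a) ∈ c.edges := by
      rcases eq_or_ne a1 z with rfl | h1z
      · exact ⟨a2, fun h => h12 h.symm, he2⟩
      · exact ⟨a1, h1z, he1⟩
    obtain ⟨a, haz, hea⟩ := pick
    rcases cycle_edge_cases hea with h | h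
    · rw [hux a h] at hea; exact hea
    · exact absurd (Sym2.congr_right.mp h) haz
  have hys : y ∈ c.support := c.snd_mem_support_of_mem_edges hxye
  -- a second neighbor w of y in G, distinct from x
  have hw : ∃ w, w ≠ x ∧ G.Adj y w := by
    obtain ⟨b1, b2, hb12, hbe1, hbe2⟩ := aux_two hc hys
    have pick : ∃ b, b ≠ x ∧ s(y, b) ∈ c.edges := by
      rcases eq_or_ne b1 x with rfl | h1x
      · exact ⟨b2, fun h => hb12 h.symm, hbe2⟩
      · exact ⟨b1, h1x, hbe1⟩
    obtain ⟨b, hbx, heb⟩ := pick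
    rcases cycle_edge_cases heb with h | h
    · exact ⟨b, hbx, h⟩
    · rw [Sym2.eq_iff] at h
      rcases h with ⟨h1, h2⟩ | ⟨h1, h2⟩
      · exact absurd h1 hxyne.symm
      · exact absurd h1 hzy.symm
  obtain ⟨w, hwx, hGyw⟩ := hw
  have hwy : w ≠ y := hGyw.ne'
  -- degree y = 2 forces neighbors exactly {x, w}
  have huy : ∀ t, G.Adj y t → t = x ∨ t = w := by
    intro t ht
    have hsub : ({x, w} : Finset V) ⊆ G.neighborFinset y := by
      intro s hs
      rw [Finset.mem_insert, Finset.mem_singleton] at hs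
      rcases hs with rfl | rfl
      · exact (G.mem_neighborFinset y s).mpr hxy.symm
      · exact (G.mem_neighborFinset y s).mpr hGyw
    have hcard2 : ({x, w} : Finset V).card = 2 := Finset.card_pair (fun h => hwx h.symm)
    have hNy : G.neighborFinset y = {x, w} :=
      (Finset.eq_of_subset_of_card_le hsub (by
        rw [hcard2]
        have hdy : (G.neighborFinset y).card = G.degree y := rfl
        omega)).symm
    have : t ∈ G.neighborFinset y := (G.mem_neighborFinset y t).mpr ht
    rw [hNy, Finset.mem_insert, Finset.mem_singleton] at this
    exact this
  -- second cycle: add edge x w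
  have hnadj2 : ¬ G.Adj x w := fun h => hwy (hux w h)
  obtain ⟨w1, c', hc', hclen', hce'⟩ := hsat x w (fun h => hwx h.symm) hnadj2
  have hxs' : x ∈ c'.support := c'.fst_mem_support_of_mem_edges hce'
  have hxye' : s(x, y) ∈ c'.edges := by
    obtain ⟨a1, a2, h12, he1, he2⟩ := aux_two hc' hxs'
    have pick : ∃ a, a ≠ w ∧ s(x, a) ∈ c'.edges := by
      rcases eq_or_ne a1 w with rfl | h1w
      · exact ⟨a2, fun h => h12 h.symm, he2⟩
      · exact ⟨a1, h1w, he1⟩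
    obtain ⟨a, haw, hea⟩ := pick
    rcases cycle_edge_cases hea with h | h
    · rw [hux a h] at hea; exact hea
    · exact absurd (Sym2.congr_right.mp h) haw
  have hys' : y ∈ c'.support := c'.snd_mem_support_of_mem_edges hxye'
  have hywe' : s(y, w) ∈ c'.edges := by
    obtain ⟨b1, b2, hb12, hbe1, hbe2⟩ := aux_two hc' hys'
    have pick : ∃ b, b ≠ x ∧ s(y, b) ∈ c'.edges := by
      rcases eq_or_ne b1 x with rfl | h1x
      · exact ⟨b2, fun h => hb12 h.symm, hbe2⟩
      · exact ⟨b1, h1x, hbe1⟩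
    obtain ⟨b, hbx, heb⟩ := pick
    have hbw : b = w := by
      rcases cycle_edge_cases heb with h | h
      · rcases huy b h with rfl | rfl
        · exact absurd rfl hbx
        · rfl
      · rw [Sym2.eq_iff] at h
        rcases h with ⟨h1, h2⟩ | ⟨h1, h2⟩
        · exact absurd h1 hxyne.symm
        · exact absurd h1 (Ne.symm hwy)
    rw [hbw] at heb; exact heb
  have hws' : w ∈ c'.support := c'.snd_mem_support_of_mem_edges hywe'
  -- the support of c' is contained in {x, y, w}
  have hclosed : ∀ a b, a ∈ ({x, y, w} : Set V) → c'.toSubgraph.Adj a b →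
      b ∈ ({x, y, w} : Set V) := by
    intro a b haS hadj
    have hab : s(a, b) ∈ c'.edges :=
      (c'.mem_edges_toSubgraph).mp ((SimpleGraph.Subgraph.mem_edgeSet).mpr hadj)
    rcases haS with h | h | h <;> rw [h] at hab
    · rcases aux_unique hc' hxs' hxye' hce' hab with h' | h' | h'
      · exact absurd h' (Ne.symm hwy)
      · exact Or.inr (Or.inl h'.symm)
      · exact Or.inr (Or.inr h'.symm)
    · have h1 : s(y, x) ∈ c'.edges := by rwa [Sym2.eq_swap] at hxye'
      rcases aux_unique hc' hys' h1 hywe' hab with h' | h' | h'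
      · exact absurd h' hwx.symm
      · exact Or.inl h'.symm
      · exact Or.inr (Or.inr h'.symm)
    · have h1 : s(w, x) ∈ c'.edges := by rwa [Sym2.eq_swap] at hce'
      have h2 : s(w, y) ∈ c'.edges := by rwa [Sym2.eq_swap] at hywe'
      rcases aux_unique hc' hws' h1 h2 hab with h' | h' | h'
      · exact absurd h' hxyne
      · exact Or.inl h'.symm
      · exact Or.inr (Or.inl h'.symm)
  have hsupS : ∀ t ∈ c'.support, t ∈ ({x, y, w} : Set V) := by
    intro t ht
    have hxv : x ∈ c'.toSubgraph.verts := (c'.mem_verts_toSubgraph).mpr hxs'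
    have htv : t ∈ c'.toSubgraph.verts := (c'.mem_verts_toSubgraph).mpr ht
    obtain ⟨p⟩ := (c'.toSubgraph_connected).coe ⟨x, hxv⟩ ⟨t, htv⟩
    exact walk_mem (H := c'.toSubgraph.coe)
        (S := {u : c'.toSubgraph.verts | (u : V) ∈ ({x, y, w} : Set V)})
        (fun a b ha hadj => hclosed a b ha ((SimpleGraph.Subgraph.coe_adj _ _ _).mp hadj))
        p (Or.inl rfl)
  -- but the support tail has k distinct vertices, and k ≥ 5 > 3 : contradiction
  have htailnd : c'.support.tail.Nodup := hc'.support_nodup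
  have hlen : c'.support.tail.length = k := by
    have h1 := c'.length_support
    have h2 : c'.support.tail.length = c'.support.length - 1 := by
      simp [List.length_tail]
    omega
  have hsub2 : c'.support.tail.toFinset ⊆ ({x, y, w} : Finset V) := by
    intro t ht
    rw [List.mem_toFinset] at ht
    rcases hsupS t (List.mem_of_mem_tail ht) with rfl | rfl | rfl <;> simp
  have hcount : c'.support.tail.toFinset.card = k := by
    rw [List.toFinset_card_of_nodup htailnd, hlen]
  have h3 : ({x, y, w} : Finset V).card ≤ 3 := by
    apply (Finset.card_insert_le _ _).trans
    have := (Finset.card_insert_le y ({w} : Finset V))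
    simp only [Finset.card_singleton] at this ⊢
    omega
  have := Finset.card_le_card hsub2
  omega
end

section
/- If G is a C_k-semisaturated graph and x is a vertex of degree 1 in G, then the graph G − x (obtained by deleting x) is also C_k-semisaturated. -/
open SimpleGraph

lemma firstDart_mem_darts' {V : Type*} {H : SimpleGraph V} {a b : V}
    (p : H.Walk a b) (hp : ¬ p.Nil) : p.firstDart hp ∈ p.darts := by
  cases p with
  | nil => simp at hp
  | cons h q =>
    simp only [SimpleGraph.Walk.darts_cons, List.mem_cons]
    left
    ext <;> simp [SimpleGraph.Walk.firstDart]

/-- A vertex on a cycle has two distinct neighbors. -/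
lemma cycle_two_nbrs {V : Type*} {H : SimpleGraph V} {x : V}
    (c : H.Walk x x) (hc : c.IsCycle) :
    ∃ y z : V, y ≠ z ∧ H.Adj x y ∧ H.Adj x z := by
  have hn : ¬ c.Nil := hc.not_nil
  have hn' : ¬ c.reverse.Nil := by
    rw [SimpleGraph.Walk.nil_iff_length_eq, SimpleGraph.Walk.length_reverse]
    have := hc.three_le_length; omega
  refine ⟨c.getVert 1, c.reverse.getVert 1, ?_, c.adj_snd hn,
    c.reverse.adj_snd hn'⟩
  intro hyz
  have hxy : x ≠ c.getVert 1 := (c.adj_snd hn).ne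
  have d1m : c.firstDart hn ∈ c.darts := firstDart_mem_darts' c hn
  have d2m : (c.reverse.firstDart hn').symm ∈ c.darts := by
    have := firstDart_mem_darts' c.reverse hn'
    rw [SimpleGraph.Walk.mem_darts_reverse] at this
    simpa using this
  have hnodup : c.edges.Nodup := hc.isTrail.edges_nodup
  have hinj := List.inj_on_of_nodup_map (f := SimpleGraph.Dart.edge) hnodup
  have heq : (c.firstDart hn).edge = ((c.reverse.firstDart hn').symm).edge := by
    simp [SimpleGraph.Walk.edge_firstDart, SimpleGraph.Dart.edge, ← hyz,
      Sym2.eq_swap]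
  have := hinj d1m d2m heq
  apply hxy
  have := congrArg (·.toProd.1) this
  simpa [SimpleGraph.Walk.firstDart, hyz] using this

/-- Lift a walk avoiding the complement of `S` to the induced subgraph on `S`. -/
lemma lift_walk {V : Type*} {H : SimpleGraph V} {S : Set V} :
    ∀ {a b : V} (w : H.Walk a b) (hs : ∀ v ∈ w.support, v ∈ S),
    ∃ w' : (H.induce S).Walk ⟨a, hs a w.start_mem_support⟩ ⟨b, hs b w.end_mem_support⟩,
      w'.map (SimpleGraph.Embedding.induce S).toHom = w := by
  intro a b w
  induction w with
  | nil => exact fun _ => ⟨SimpleGraph.Walk.nil, rfl⟩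
  | @cons a1 b1 c1 h p ih =>
    intro hs
    obtain ⟨p', hp'⟩ := ih (fun t ht => hs t (by simp [ht]))
    have hadj : (H.induce S).Adj ⟨a1, hs a1 (by simp)⟩ ⟨b1, hs b1 (by simp)⟩ := h
    exact ⟨SimpleGraph.Walk.cons hadj p', by simp [hp']⟩

theorem stmt_2 {V : Type*} [Fintype V] (G : SimpleGraph V) [DecidableRel G.Adj]
    (k : ℕ) (hsat : IsCkSemisaturated k G)
    (x : V) (hd : G.degree x = 1) :
    IsCkSemisaturated k (G.induce {v : V | v ≠ x}) := by
  classical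
  intro u v huv hadj
  have huv' : (u : V) ≠ (v : V) := fun h => huv (Subtype.ext h)
  have hadj' : ¬ G.Adj u v := hadj
  obtain ⟨w, c, hc, hlen, he⟩ := hsat u v huv' hadj'
  -- every neighbor of x in the augmented graph is a neighbor in G
  have hconv : ∀ y, (addEdge G (u : V) (v : V)).Adj x y → G.Adj x y := by
    intro y hy
    rcases hy with h | h
    · exact h
    · exfalso
      rw [SimpleGraph.fromEdgeSet_adj, Set.mem_singleton_iff, Sym2.eq_iff] at h
      obtain ⟨hmem, -⟩ := h
      rcases hmem with ⟨h1, -⟩ | ⟨h1, -⟩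
      · exact u.2 h1.symm
      · exact v.2 h1.symm
  -- x is not on the cycle
  have hx : x ∉ c.support := by
    intro hxs
    obtain ⟨y, z, hyz, hay, haz⟩ := cycle_two_nbrs (c.rotate x hxs) (hc.rotate hxs)
    have hy : y ∈ G.neighborFinset x := by simpa using hconv y hay
    have hz : z ∈ G.neighborFinset x := by simpa using hconv z haz
    have h2 : 2 ≤ (G.neighborFinset x).card := by
      have hsub : ({y, z} : Finset V) ⊆ G.neighborFinset x := by
        intro t ht; simp at ht; rcases ht with rfl | rfl <;> assumption
      calc 2 = ({y, z} : Finset V).card := (Finset.card_pair hyz).symm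
        _ ≤ _ := Finset.card_le_card hsub
    rw [← SimpleGraph.card_neighborFinset_eq_degree] at hd
    omega
  have hs : ∀ y ∈ c.support, y ∈ {v : V | v ≠ x} := fun y hy hyx => hx (hyx ▸ hy)
  obtain ⟨c', hmap⟩ := lift_walk c hs
  -- identify the two graphs on the vertex set
  have heq : addEdge (G.induce {v : V | v ≠ x}) u v
      = (addEdge G (u : V) (v : V)).induce {v : V | v ≠ x} := by
    ext a b
    simp only [addEdge, SimpleGraph.sup_adj, SimpleGraph.fromEdgeSet_adj,
      Set.mem_singleton_iff, SimpleGraph.comap_adj, Function.Embedding.coe_subtype,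
      Sym2.eq_iff, Subtype.ext_iff, ne_eq]
  rw [heq]
  refine ⟨⟨w, hs w c.start_mem_support⟩, c', ?_, ?_, ?_⟩
  · have hinj : Function.Injective
        (SimpleGraph.Embedding.induce (G := addEdge G (u : V) (v : V))
          {v : V | v ≠ x}).toHom :=
      Subtype.val_injective
    rw [← SimpleGraph.Walk.map_isCycle_iff_of_injective hinj, hmap]
    exact hc
  · have h3 := congrArg SimpleGraph.Walk.length hmap
    rw [SimpleGraph.Walk.length_map] at h3
    exact h3.trans hlen
  · rw [← hmap] at he; erw [SimpleGraph.Walk.edges_map] at he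
    obtain ⟨e, hem, hee⟩ := List.mem_map.mp he
    have he2 : e = s(u, v) := by
      apply Sym2.map.injective
        (f := (Subtype.val : {v : V | v ≠ x} → V)) Subtype.val_injective
      exact hee
    exact he2 ▸ hem
end

section
/- If G is a C_k-saturated graph with k ≥ 5 and x, y, w form a path in G where x has degree 1 and y is its neighbor, then w has degree at least 3 in G. -/
open SimpleGraph

lemma addEdge_adj {V : Type*} (G : SimpleGraph V) (u v a b : V) :
    (addEdge G u v).Adj a b ↔ G.Adj a b ∨ (s(a,b) = s(u,v) ∧ a ≠ b) := by
  simp [addEdge, fromEdgeSet_adj]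

lemma loop_path_nil {V : Type*} {G : SimpleGraph V} {a : V} {q : G.Walk a a}
    (h : q.IsPath) : q.length = 0 := by
  cases q with
  | nil => rfl
  | cons h' r =>
    rw [Walk.cons_isPath_iff] at h
    exact absurd r.end_mem_support h.2

lemma extract {V : Type*} [DecidableEq V] {G : SimpleGraph V} {x z y : V} {k : ℕ} (hk : 5 ≤ k)
    (hyz : y ≠ z)
    (hnc : ¬ hasCycleLength G k)
    (hcyc : hasCycleLength (addEdge G x z) k)
    (hN : ∀ t, (addEdge G x z).Adj x t → t = y ∨ t = z) :
    ∃ q : G.Walk z y, q.IsPath ∧ q.length + 2 = k ∧ x ∉ q.support := by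
  obtain ⟨v, c, hc, hlen⟩ := hcyc
  -- the cycle must use the new edge
  have hmem : s(x, z) ∈ c.edges := by
    by_contra hne
    refine hnc ⟨v, c.transfer G ?_, hc.transfer _, by rw [Walk.length_transfer]; exact hlen⟩
    intro e he
    have he' := c.edges_subset_edgeSet he
    simp only [addEdge, edgeSet_sup, edgeSet_fromEdgeSet, Set.mem_union, Set.mem_diff,
      Set.mem_singleton_iff] at he'
    rcases he' with h | ⟨rfl, _⟩
    · exact h
    · exact absurd he hne
  have hxsup : x ∈ c.support := c.fst_mem_support_of_mem_edges hmem
  set c' := c.rotate x hxsup with hc'def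
  have hc' : c'.IsCycle := hc.rotate hxsup
  have hlen' : c'.length = k := by
    have := (c.rotate_edges x hxsup).perm.length_eq
    rwa [Walk.length_edges, Walk.length_edges, hlen] at this
  clear_value c'
  clear hmem hxsup hlen hc c hc'def
  cases c' with
  | nil => simp at hlen'; omega
  | cons h p =>
    rename_i a
    rw [Walk.cons_isCycle_iff] at hc'
    obtain ⟨hp, -⟩ := hc'
    have hxa : x ≠ a := h.ne
    have hplen : p.length + 1 = k := by simpa using hlen'
    obtain ⟨b, hxb, q, hq⟩ := (p.reverse).exists_eq_cons_of_ne hxa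
    have hpr : p.reverse.IsPath := hp.reverse
    rw [hq, Walk.cons_isPath_iff] at hpr
    obtain ⟨hqp, hxq⟩ := hpr
    have hqlen : q.length + 2 = k := by
      have : p.reverse.length = p.length := Walk.length_reverse p
      rw [hq] at this
      simp only [Walk.length_cons] at this
      omega
    have hab : a ≠ b := by
      rintro rfl
      have := loop_path_nil hqp
      omega
    have hedges : ∀ e ∈ q.edges, e ∈ G.edgeSet := by
      intro e he
      have he' := q.edges_subset_edgeSet he
      simp only [addEdge, edgeSet_sup, edgeSet_fromEdgeSet, Set.mem_union, Set.mem_diff,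
        Set.mem_singleton_iff] at he'
      rcases he' with h' | ⟨rfl, -⟩
      · exact h'
      · exact absurd (q.fst_mem_support_of_mem_edges he) hxq
    have hqG := q.transfer G hedges
    have hqGp : (q.transfer G hedges).IsPath := hqp.transfer hedges
    have hqGs : x ∉ (q.transfer G hedges).support := by
      rwa [Walk.support_transfer]
    have hqGl : (q.transfer G hedges).length + 2 = k := by
      rwa [Walk.length_transfer]
    rcases hN a h with rfl | rfl <;> rcases hN b hxb with rfl | rfl
    · exact absurd rfl hab
    · exact ⟨q.transfer G hedges, hqGp, hqGl, hqGs⟩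
    · exact ⟨(q.transfer G hedges).reverse, hqGp.reverse,
        by rwa [Walk.length_reverse], by rwa [Walk.support_reverse, List.mem_reverse]⟩
    · exact absurd rfl hab

theorem stmt_3 {V : Type*} [Fintype V] (G : SimpleGraph V) [DecidableRel G.Adj]
    (k : ℕ) (hk : 5 ≤ k) (hsat : IsCkSaturated k G)
    (x y w : V) (hd : G.degree x = 1) (hxy : G.Adj x y) (hyw : G.Adj y w)
    (hxw : x ≠ w) :
    3 ≤ G.degree w := by
  classical
  by_contra hlt
  push_neg at hlt
  have hdw : G.degree w ≤ 2 := by omega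
  have hnc := hsat.1
  have hNx : ∀ t, G.Adj x t → t = y := by
    intro t ht
    have h1 : t ∈ G.neighborFinset x := by rwa [mem_neighborFinset]
    have h2 : y ∈ G.neighborFinset x := by rwa [mem_neighborFinset]
    exact Finset.card_le_one.mp (le_of_eq hd) _ h1 _ h2
  have hwy : w ≠ y := hyw.ne'
  have hxny : ¬ G.Adj x w := fun h => hwy (hNx w h)
  by_cases hA : ∀ t, G.Adj w t → t = y
  · -- w has only neighbor y : contradiction
    have hcyc := hsat.2 x w hxw hxny
    have hN : ∀ t, (addEdge G x w).Adj x t → t = y ∨ t = w := by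
      intro t ht
      rw [addEdge_adj] at ht
      rcases ht with h | ⟨he, hne⟩
      · exact Or.inl (hNx t h)
      · rw [Sym2.eq_iff] at he
        rcases he with ⟨-, rfl⟩ | ⟨h1, rfl⟩
        · exact Or.inr rfl
        · exact absurd h1 hxw
    obtain ⟨q, hqp, hql, hqx⟩ := extract hk hwy.symm hnc hcyc hN
    obtain ⟨t, hwt, r, hr⟩ := q.exists_eq_cons_of_ne hwy
    obtain rfl := hA t hwt
    rw [hr, Walk.cons_isPath_iff] at hqp
    have h0 := loop_path_nil hqp.1
    have h1 : q.length = 1 := by rw [hr]; simp [h0]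
    omega
  · push_neg at hA
    obtain ⟨z, hwz, hzy⟩ := hA
    have hNw : ∀ t, G.Adj w t → t = y ∨ t = z := by
      intro t ht
      by_contra hcon
      push_neg at hcon
      have hsub : ({y, z, t} : Finset V) ⊆ G.neighborFinset w := by
        intro s hs
        simp only [Finset.mem_insert, Finset.mem_singleton] at hs
        rw [mem_neighborFinset]
        rcases hs with rfl | rfl | rfl
        · exact hyw.symm
        · exact hwz
        · exact ht
      have hcard : ({y, z, t} : Finset V).card = 3 := by
        rw [Finset.card_insert_of_notMem (by simp [hzy.symm, Ne.symm hcon.1]),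
          Finset.card_insert_of_notMem (by simp [Ne.symm hcon.2]), Finset.card_singleton]
      have := Finset.card_le_card hsub
      rw [hcard, ← card_neighborFinset_eq_degree] at *
      omega
    have hzx : z ≠ x := fun h => hxny (h ▸ hwz.symm)
    have hnxz : ¬ G.Adj x z := fun h => hzy (hNx z h)
    have hcyc := hsat.2 x z hzx.symm hnxz
    have hN : ∀ t, (addEdge G x z).Adj x t → t = y ∨ t = z := by
      intro t ht
      rw [addEdge_adj] at ht
      rcases ht with h | ⟨he, hne⟩
      · exact Or.inl (hNx t h)
      · rw [Sym2.eq_iff] at he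
        rcases he with ⟨-, rfl⟩ | ⟨h1, rfl⟩
        · exact Or.inr rfl
        · exact absurd h1 hzx.symm
    obtain ⟨q, hqp, hql, hqx⟩ := extract hk (Ne.symm hzy) hnc hcyc hN
    have hwz' : w ≠ z := hwz.ne
    have hwq : w ∉ q.support := by
      intro hw
      obtain ⟨q₁, q₂, rfl⟩ := Walk.mem_support_iff_exists_append.mp hw
      have hnd := hqp.support_nodup
      rw [Walk.support_append, List.nodup_append] at hnd
      obtain ⟨-, -, hdisj⟩ := hnd
      have hq1p : q₁.IsPath := hqp.of_append_left
      have hq2p : q₂.IsPath := hqp.of_append_right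
      have hq1len : q₁.length = 1 := by
        obtain ⟨t₁, ht₁, r₁, hr₁⟩ := q₁.reverse.exists_eq_cons_of_ne hwz'
        rcases hNw t₁ ht₁ with h | h <;> subst h
        · exfalso
          have hy1 : t₁ ∈ q₁.support := by
            have : t₁ ∈ q₁.reverse.support := by
              rw [hr₁]
              exact List.mem_cons_of_mem _ r₁.start_mem_support
            rwa [Walk.support_reverse, List.mem_reverse] at this
          exact hdisj _ hy1 _ (Walk.end_mem_tail_support_of_ne hwy q₂) rfl
        · have hrp : q₁.reverse.IsPath := hq1p.reverse
          rw [hr₁, Walk.cons_isPath_iff] at hrp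
          have h0 := loop_path_nil hrp.1
          have h1 : q₁.reverse.length = 1 := by rw [hr₁]; simp [h0]
          rwa [Walk.length_reverse] at h1
      have hq2len : q₂.length = 1 := by
        obtain ⟨t₂, ht₂, r₂, hr₂⟩ := q₂.exists_eq_cons_of_ne hwy
        rcases hNw t₂ ht₂ with h | h <;> subst h
        · rw [hr₂, Walk.cons_isPath_iff] at hq2p
          have h0 := loop_path_nil hq2p.1
          rw [hr₂]; simp [h0]
        · exfalso
          have hz2 : t₂ ∈ q₂.support.tail := by
            rw [hr₂, Walk.support_cons]
            exact r₂.start_mem_support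
          exact hdisj _ q₁.start_mem_support _ hz2 rfl
      rw [Walk.length_append] at hql
      omega
    refine hnc ⟨w, Walk.cons hwz (q.concat hyw), ?_, ?_⟩
    · rw [Walk.cons_isCycle_iff]
      refine ⟨?_, ?_⟩
      · rw [Walk.isPath_def, Walk.support_concat, List.nodup_append]
        exact ⟨hqp.support_nodup, List.nodup_singleton w,
          fun a ha b hb hab => by rw [List.mem_singleton] at hb; subst hb; subst hab; exact hwq ha⟩
      · rw [Walk.edges_concat, List.concat_eq_append, List.mem_append]
        rintro (hm | hm)
        · exact hwq (q.fst_mem_support_of_mem_edges hm)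
        · rw [List.mem_singleton, Sym2.eq_iff] at hm
          rcases hm with ⟨rfl, -⟩ | ⟨-, rfl⟩
          · exact hwy rfl
          · exact hzy rfl
    · rw [Walk.length_cons, Walk.length_concat]
      omega
end

section
/- If G is a connected C_k-semisaturated graph on n ≥ k vertices with minimum degree at least 2 and k ≥ 5, then every vertex of G lies on a cycle of length at most k+1. -/
open SimpleGraph

/- Auxiliary lemmas -/

lemma aux_length_pos {V : Type*} {G : SimpleGraph V} {u v : V} (p : G.Walk u v)
    (h : u ≠ v) : 0 < p.length := by
  cases p with
  | nil => exact absurd rfl h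
  | cons h q => simp [Walk.length_cons]

lemma aux_end_mem_support_tail {V : Type*} {G : SimpleGraph V} {u v : V} (p : G.Walk u v)
    (h : u ≠ v) : v ∈ p.support.tail := by
  cases p with
  | nil => exact absurd rfl h
  | cons h q => simpa using q.end_mem_support

/-- A path from `a` to `w` of length at least 2 cannot contain the edge `{w,a}`. -/
lemma aux_key {V : Type*} {G : SimpleGraph V} {a w : V} {p : G.Walk a w}
    (hp : p.IsPath) (h2 : 2 ≤ p.length) : s(w, a) ∉ p.edges := by
  cases p with
  | nil => simp
  | @cons _ x _ h q =>
    rw [Walk.cons_isPath_iff] at hp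
    intro hmem
    rw [Walk.edges_cons, List.mem_cons] at hmem
    rcases hmem with he | hmem
    · rw [Sym2.eq_iff] at he
      rcases he with ⟨hwa, hax⟩ | ⟨hwx, -⟩
      · exact hp.2 (by rw [hax]; exact q.start_mem_support)
      · subst hwx
        have : q = Walk.nil := (Walk.isPath_iff_eq_nil (p := q)).mp hp.1
        subst this
        simp at h2
    · exact hp.2 (Walk.snd_mem_support_of_mem_edges q hmem)

/-- Splitting a cycle at a vertex gives two paths. -/
lemma aux_cycle_split {V : Type*} [DecidableEq V] {G : SimpleGraph V} {a b : V}
    (c : G.Walk a a) (hc : c.IsCycle) (hb : b ∈ c.support) (hba : b ≠ a) :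
    (c.takeUntil b hb).IsPath ∧ (c.dropUntil b hb).IsPath := by
  set p := c.takeUntil b hb with hp
  set q := c.dropUntil b hb with hq
  have hspec : p.append q = c := Walk.take_spec c hb
  have htail : c.support.tail = p.support.tail ++ q.support.tail := by
    conv_lhs => rw [← hspec]
    rw [Walk.support_append, Walk.support_eq_cons p]
    simp
  have hnd : (p.support.tail ++ q.support.tail).Nodup := htail ▸ hc.support_nodup
  rw [List.nodup_append] at hnd
  obtain ⟨hnd1, hnd2, hdisj⟩ := hnd
  have haq : a ∈ q.support.tail := aux_end_mem_support_tail q hba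
  have hbp : b ∈ p.support.tail := aux_end_mem_support_tail p (Ne.symm hba)
  constructor
  · rw [Walk.isPath_def, Walk.support_eq_cons p, List.nodup_cons]
    exact ⟨fun h => hdisj _ h _ haq rfl, hnd1⟩
  · rw [Walk.isPath_def, Walk.support_eq_cons q, List.nodup_cons]
    exact ⟨fun h => hdisj _ hbp _ h rfl, hnd2⟩

theorem stmt_6 {V : Type*} [Fintype V] (G : SimpleGraph V) [DecidableRel G.Adj]
    (n k : ℕ) (hn : Fintype.card V = n) (hkn : k ≤ n) (hk : 5 ≤ k)
    (hconn : G.Connected) (hmin : ∀ v : V, 2 ≤ G.degree v)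
    (hsat : IsCkSemisaturated k G) (w : V) :
    ∃ (v : V) (c : G.Walk v v), c.IsCycle ∧ c.length ≤ k + 1 ∧ w ∈ c.support := by
  classical
  obtain ⟨a, ha, b, hb, hab⟩ := Finset.one_lt_card.mp
    (lt_of_lt_of_le one_lt_two (hmin w))
  rw [mem_neighborFinset] at ha hb
  have hwa : G.Adj w a := ha
  have hwb : G.Adj w b := hb
  have hwa' : w ≠ a := hwa.ne
  have hwb' : w ≠ b := hwb.ne
  by_cases hGab : G.Adj a b
  · -- triangle w a b
    refine ⟨w, Walk.cons hwa (Walk.cons hGab (Walk.cons hwb.symm Walk.nil)), ?_, ?_, ?_⟩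
    · rw [Walk.cons_isCycle_iff]
      constructor
      · rw [Walk.isPath_def]
        simp [hab, hwa'.symm, hwb'.symm, hGab.ne]
      · intro hmem
        simp only [Walk.edges_cons, Walk.edges_nil, List.mem_cons, List.not_mem_nil,
          or_false, Sym2.eq_iff] at hmem
        rcases hmem with (⟨h1, h2⟩ | ⟨h1, h2⟩) | (⟨h1, h2⟩ | ⟨h1, h2⟩)
        · exact hwa' h1
        · exact hwb' h1
        · exact hwb' h1
        · exact hab h2
    · simp only [Walk.length_cons, Walk.length_nil]; omega
    · simp
  · -- use semisaturation
    obtain ⟨u0, c0, hc0, hlen0, hedge0⟩ := hsat a b hab hGab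
    have ha_sup : a ∈ c0.support := c0.fst_mem_support_of_mem_edges hedge0
    set c1 := c0.rotate a ha_sup with hc1def
    have hc1 : c1.IsCycle := (Walk.isCycle_rotate ha_sup).mpr hc0
    have hrot : c1.edges ~r c0.edges := c0.rotate_edges a ha_sup
    have hedge1 : s(a, b) ∈ c1.edges := hrot.mem_iff.mpr hedge0
    have hlen1 : c1.length = k := by
      rw [← Walk.length_edges, hrot.perm.length_eq, Walk.length_edges, hlen0]
    have hb_sup : b ∈ c1.support := c1.snd_mem_support_of_mem_edges hedge1
    set p := c1.takeUntil b hb_sup with hpdef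
    set q := c1.dropUntil b hb_sup with hqdef
    have hspec : p.append q = c1 := Walk.take_spec c1 hb_sup
    have hlen_pq : p.length + q.length = k := by
      rw [← Walk.length_append, hspec, hlen1]
    obtain ⟨hp_path, hq_path⟩ := aux_cycle_split c1 hc1 hb_sup hab.symm
    have hnodup : (p.edges ++ q.edges).Nodup := by
      rw [← Walk.edges_append, hspec]
      exact hc1.isCircuit.isTrail.edges_nodup
    rw [List.nodup_append] at hnodup
    have hedge_pq : s(a, b) ∈ p.edges ∨ s(a, b) ∈ q.edges := by
      rw [← List.mem_append, ← Walk.edges_append, hspec]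
      exact hedge1
    -- Extract a path r : a → b in G of length k - 1
    have hmain : ∃ r : G.Walk a b, r.IsPath ∧ r.length + 1 = k := by
      have transfer_aux : ∀ (s : (addEdge G a b).Walk a b), s(a, b) ∉ s.edges →
          s.IsPath → ∃ r : G.Walk a b, r.IsPath ∧ r.length = s.length := by
        intro s hs hsp
        have hsub : ∀ e ∈ s.edges, e ∈ G.edgeSet := by
          intro e he
          have h1 : e ∈ (addEdge G a b).edgeSet := s.edges_subset_edgeSet he
          have hne : e ≠ s(a, b) := fun h => hs (h ▸ he)
          rw [addEdge, edgeSet_sup, edgeSet_fromEdgeSet] at h1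
          rcases h1 with h1 | h1
          · exact h1
          · exact absurd h1.1 hne
        exact ⟨s.transfer G hsub, hsp.transfer hsub, Walk.length_transfer s hsub⟩
      rcases hedge_pq with hin | hin
      · -- edge in p : Walk a b, so p.length = 1 and q has length k - 1
        have hp1 : p.length = 1 := by
          have hpos : 0 < p.length := aux_length_pos p hab
          by_contra hne
          have h2 : 2 ≤ p.length := by omega
          exact aux_key hp_path h2 (Sym2.eq_swap ▸ hin)
        have hqnot : s(a, b) ∉ q.edges := fun h => hnodup.2.2 _ hin _ h rfl
        have hqnot' : s(a, b) ∉ q.reverse.edges := by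
          rwa [Walk.edges_reverse, List.mem_reverse]
        obtain ⟨r, hr1, hr2⟩ := transfer_aux q.reverse hqnot' hq_path.reverse
        refine ⟨r, hr1, ?_⟩
        rw [hr2, Walk.length_reverse]
        omega
      · -- edge in q : Walk b a, so q.length = 1 and p has length k - 1
        have hq1 : q.length = 1 := by
          have hpos : 0 < q.length := aux_length_pos q hab.symm
          by_contra hne
          have h2 : 2 ≤ q.length := by omega
          exact aux_key hq_path h2 hin
        have hpnot : s(a, b) ∉ p.edges := fun h => hnodup.2.2 _ h _ hin rfl
        obtain ⟨r, hr1, hr2⟩ := transfer_aux p hpnot hp_path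
        exact ⟨r, hr1, by omega⟩
    obtain ⟨r, hr_path, hr_len⟩ := hmain
    by_cases hwr : w ∈ r.support
    · -- w is on the path: close off a subpath with an edge to w
      set r1 := r.takeUntil w hwr with hr1def
      set r2 := r.dropUntil w hwr with hr2def
      have hr1_path : r1.IsPath := hr_path.takeUntil hwr
      have hr2_path : r2.IsPath := hr_path.dropUntil hwr
      have hsum : r1.length + r2.length = r.length := by
        rw [← Walk.length_append, Walk.take_spec]
      have h1pos : 0 < r1.length := aux_length_pos r1 (Ne.symm hwa')
      have h2pos : 0 < r2.length := aux_length_pos r2 hwb'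
      rcases le_or_gt 2 r1.length with h2 | h2
      · refine ⟨w, Walk.cons hwa r1, ?_, ?_, ?_⟩
        · rw [Walk.cons_isCycle_iff]
          exact ⟨hr1_path, aux_key hr1_path h2⟩
        · rw [Walk.length_cons]; omega
        · simp
      · have h2' : 2 ≤ r2.length := by omega
        have h2'' : 2 ≤ r2.reverse.length := by rwa [Walk.length_reverse]
        refine ⟨w, Walk.cons hwb r2.reverse, ?_, ?_, ?_⟩
        · rw [Walk.cons_isCycle_iff]
          exact ⟨hr2_path.reverse, aux_key hr2_path.reverse h2''⟩
        · rw [Walk.length_cons, Walk.length_reverse]; omega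
        · simp
    · -- w is not on the path: w → a → … → b → w is a cycle of length k + 1
      refine ⟨w, Walk.cons hwa (r.concat hwb.symm), ?_, ?_, ?_⟩
      · rw [Walk.cons_isCycle_iff]
        constructor
        · rw [Walk.isPath_def, Walk.support_concat,
            List.nodup_append]
          refine ⟨hr_path.support_nodup, List.nodup_singleton w, ?_⟩
          intro x hx y hx' hxy
          rw [List.mem_singleton] at hx'
          exact hwr (hx' ▸ hxy ▸ hx)
        · rw [Walk.edges_concat, List.concat_eq_append, List.mem_append]
          rintro (h | h)
          · exact hwr (r.fst_mem_support_of_mem_edges h)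
          · rw [List.mem_singleton, Sym2.eq_iff] at h
            rcases h with ⟨h1, -⟩ | ⟨-, h2⟩
            · exact hwb' h1
            · exact hab h2
      · rw [Walk.length_cons, Walk.length_concat]; omega
      · simp
end

section
/- For all n ≥ k ≥ 6, every C_k-semisaturated graph on n vertices has more than (1 + 1/(2k−2))·n − 2 edges; consequently ssat(n, C_k) > (1 + 1/(2k−2))·n − 2. -/
open SimpleGraph

/-- `sat(n, C_k)`: minimum number of edges of a `C_k`-saturated graph on `n` vertices. -/
noncomputable def satNum (n k : ℕ) : ℕ :=
  sInf {m : ℕ | ∃ G : SimpleGraph (Fin n), IsCkSaturated k G ∧ G.edgeSet.ncard = m}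

/-- `ssat(n, C_k)`: minimum number of edges of a `C_k`-semisaturated graph on `n` vertices. -/
noncomputable def ssatNum (n k : ℕ) : ℕ :=
  sInf {m : ℕ | ∃ G : SimpleGraph (Fin n), IsCkSemisaturated k G ∧ G.edgeSet.ncard = m}


namespace CkHelp

set_option linter.unusedSectionVars false

variable {V : Type*} [DecidableEq V] {G : SimpleGraph V}



lemma mem_support_of_mem_edge {u v : V} (p : G.Walk u v) {e : Sym2 V} {x : V}
    (he : e ∈ p.edges) (hx : x ∈ e) : x ∈ p.support := by
  induction e using Sym2.ind with
  | _ a b =>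
    rcases Sym2.mem_iff.mp hx with rfl | rfl
    · exact p.fst_mem_support_of_mem_edges he
    · exact p.snd_mem_support_of_mem_edges he

lemma path_end_edge {x y : V} (p : G.Walk x y) (hp : p.IsPath) (he : s(x, y) ∈ p.edges) :
    p.length = 1 := by
  cases p with
  | nil => simp at he
  | cons h q =>
    rw [Walk.edges_cons, List.mem_cons] at he
    rcases he with he | he
    · rcases Sym2.eq_iff.mp he with ⟨-, rfl⟩ | ⟨rfl, rfl⟩
      · have : q = Walk.nil := (Walk.isPath_iff_eq_nil (p := q)).mp hp.of_cons
        subst this; simp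
      · exact absurd rfl h.ne
    · exact absurd (q.fst_mem_support_of_mem_edges he)
        ((Walk.cons_isPath_iff h q).mp hp).2

lemma cycle_split {y x b : V} (h : G.Adj y b) (q : G.Walk b y)
    (hc : (Walk.cons h q).IsCycle) (he : s(x, y) ∈ (Walk.cons h q).edges) :
    ∃ p : G.Walk x y, p.IsPath ∧ p.length + 1 = (Walk.cons h q).length ∧
      ∀ e ∈ p.edges, e ∈ (Walk.cons h q).edges ∧ e ≠ s(x, y) := by
  obtain ⟨hq, hs⟩ := (Walk.cons_isCycle_iff q h).mp hc
  rw [Walk.edges_cons, List.mem_cons] at he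
  rcases he with he | he
  · rcases Sym2.eq_iff.mp he with ⟨rfl, rfl⟩ | ⟨rfl, -⟩
    · exact absurd rfl h.ne
    · refine ⟨q, hq, by simp, fun e heq => ⟨by simp [heq], ?_⟩⟩
      intro hcontra
      refine hs ?_
      rw [Sym2.eq_swap, ← hcontra]
      exact heq
  · have hxq : x ∈ q.support := q.fst_mem_support_of_mem_edges he
    set q₁ := q.takeUntil x hxq with hq₁def
    set q₂ := q.dropUntil x hxq with hq₂def
    have hspec : q₁.append q₂ = q := q.take_spec hxq
    have hxyne : x ≠ y := (q.adj_of_mem_edges he).ne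
    have hnodup : (q₁.support ++ q₂.support.tail).Nodup := by
      have := hq.support_nodup
      rwa [← hspec, Walk.support_append] at this
    have hyq₂t : y ∈ q₂.support.tail := by
      have : y ∈ q₂.support := q₂.end_mem_support
      rcases (Walk.mem_support_iff q₂).mp this with rfl | h'
      · exact absurd rfl hxyne.symm
      · exact h'
    have hynotq₁ : y ∉ q₁.support := fun hy =>
      (List.disjoint_of_nodup_append hnodup) hy hyq₂t
    have hq1 : q₁.IsPath := hq.takeUntil hxq
    have hq2 : q₂.IsPath := hq.dropUntil hxq
    have hqedges : q.edges = q₁.edges ++ q₂.edges := by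
      rw [← hspec, Walk.edges_append]
    have heq₂ : s(x, y) ∈ q₂.edges := by
      rcases List.mem_append.mp (by rwa [hqedges] at he) with h' | h'
      · exact absurd (q₁.snd_mem_support_of_mem_edges h') hynotq₁
      · exact h'
    have hq₂len : q₂.length = 1 := path_end_edge q₂ hq2 heq₂
    have hq₁len : q₁.length + 1 = q.length := by
      have := congrArg Walk.length hspec
      rw [Walk.length_append, hq₂len] at this
      omega
    refine ⟨(Walk.cons h q₁).reverse, ?_, ?_, ?_⟩
    · exact ((Walk.cons_isPath_iff h q₁).mpr ⟨hq1, hynotq₁⟩).reverse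
    · rw [Walk.length_reverse, Walk.length_cons, Walk.length_cons]
      omega
    · intro e hee
      rw [Walk.edges_reverse, List.mem_reverse, Walk.edges_cons, List.mem_cons] at hee
      have hqnodup : q.edges.Nodup := hq.edges_nodup
      rw [hqedges] at hqnodup
      rcases hee with rfl | hee
      · refine ⟨by simp, ?_⟩
        intro hcontra
        exact hs (by rw [hcontra]; exact he)
      · constructor
        · rw [Walk.edges_cons, List.mem_cons, hqedges, List.mem_append]
          exact Or.inr (Or.inl hee)
        · intro hcontra
          exact (List.disjoint_of_nodup_append hqnodup) (hcontra ▸ hee) heq₂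

lemma cycle_edge_path {w x y : V} (c : G.Walk w w) (hc : c.IsCycle)
    (he : s(x, y) ∈ c.edges) :
    ∃ p : G.Walk x y, p.IsPath ∧ p.length + 1 = c.length ∧
      ∀ e ∈ p.edges, e ∈ c.edges ∧ e ≠ s(x, y) := by
  have hy : y ∈ c.support := c.snd_mem_support_of_mem_edges he
  have hc' := hc.rotate hy
  have hrot := c.rotate_edges y hy
  have he' : s(x, y) ∈ (c.rotate y hy).edges := hrot.mem_iff.mpr he
  have hlen : (c.rotate y hy).length = c.length := by
    rw [← Walk.length_edges, ← Walk.length_edges]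
    exact hrot.perm.length_eq
  rcases hrotc : c.rotate y hy with _ | ⟨h, q⟩
  · rw [hrotc] at he'; simp at he'
  · rw [hrotc] at hc' he' hlen
    obtain ⟨p, h1, h2, h3⟩ := cycle_split h q hc' he'
    exact ⟨p, h1, by omega, fun e hee =>
      ⟨hrot.mem_iff.mp (hrotc ▸ (h3 e hee).1), (h3 e hee).2⟩⟩

lemma edge_at {v w : V} (c : G.Walk w w) (hc : c.IsCycle) (hv : v ∈ c.support) :
    ∃ z, s(v, z) ∈ c.edges := by
  have hrot := c.rotate_edges v hv
  have hlen : (c.rotate v hv).edges.length = c.edges.length := hrot.perm.length_eq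
  rcases hrotc : c.rotate v hv with _ | ⟨h, q⟩
  · rw [hrotc] at hlen
    simp only [Walk.edges_nil, List.length_nil] at hlen
    have h3 := hc.three_le_length
    rw [← Walk.length_edges] at h3
    omega
  · obtain ⟨b, hb⟩ : ∃ z, s(v, z) ∈ (c.rotate v hv).edges := by
      rw [hrotc, Walk.edges_cons]
      exact ⟨_, List.mem_cons_self⟩
    exact ⟨b, hrot.mem_iff.mp hb⟩

lemma lift_walk {H : SimpleGraph V} {a b : V} (p : G.Walk a b)
    (h : ∀ x y, s(x, y) ∈ p.edges → H.Reachable x y) : H.Reachable a b := by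
  induction p with
  | nil => exact Reachable.refl _
  | cons h' q ih =>
    refine (h _ _ (by simp)).trans (ih fun x y hxy => h x y ?_)
    rw [Walk.edges_cons]
    exact List.mem_cons_of_mem _ hxy



section Semi

variable {k : ℕ}

/-- `u` is a pendant vertex whose unique neighbour is `w`. -/
def IsLeafAt (G : SimpleGraph V) (u w : V) : Prop :=
  G.Adj u w ∧ ∀ x, G.Adj u x → x = w

/-- `v` has at least two distinct neighbours. -/
def TwoPlus (G : SimpleGraph V) (v : V) : Prop :=
  ∃ x y, x ≠ y ∧ G.Adj v x ∧ G.Adj v y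

lemma exists_path (hG : IsCkSemisaturated k G) {u v : V} (hne : u ≠ v)
    (hadj : ¬ G.Adj u v) : ∃ p : G.Walk u v, p.IsPath ∧ p.length + 1 = k := by
  obtain ⟨w, c, hc, hlen, he⟩ := hG u v hne hadj
  obtain ⟨p, hp, hplen, hpe⟩ := cycle_edge_path c hc he
  have hsub : ∀ e ∈ p.edges, e ∈ G.edgeSet := by
    intro e hee
    have h1 : e ∈ (addEdge G u v).edgeSet := p.edges_subset_edgeSet hee
    have h2 : e ≠ s(u, v) := (hpe e hee).2
    rw [addEdge, edgeSet_sup, Set.mem_union, edgeSet_fromEdgeSet] at h1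
    rcases h1 with h1 | h1
    · exact h1
    · exact absurd h1.1 (by simpa using h2)
  refine ⟨p.transfer G hsub, hp.transfer hsub, ?_⟩
  rw [Walk.length_transfer]
  omega

lemma semi_preconnected (hG : IsCkSemisaturated k G) : G.Preconnected := by
  intro u v
  rcases eq_or_ne u v with rfl | hne
  · exact Reachable.refl _
  by_cases hadj : G.Adj u v
  · exact hadj.reachable
  · obtain ⟨p, -, -⟩ := exists_path hG hne hadj
    exact ⟨p⟩

lemma exists_nbr [Fintype V] (hG : IsCkSemisaturated k G) (hk : 3 ≤ k)
    (hc2 : 2 ≤ Fintype.card V) (v : V) : ∃ w, G.Adj v w := by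
  obtain ⟨u, hu⟩ := Fintype.exists_ne_of_one_lt_card (by omega) v
  by_cases h : G.Adj v u
  · exact ⟨u, h⟩
  obtain ⟨p, -, hplen⟩ := exists_path hG hu.symm h
  cases p with
  | nil => simp at hplen; omega
  | cons h' q => exact ⟨_, h'⟩

lemma leaf_or_two [Fintype V] (hG : IsCkSemisaturated k G) (hk : 3 ≤ k)
    (hc2 : 2 ≤ Fintype.card V) (v : V) :
    (∃ w, IsLeafAt G v w) ∨ TwoPlus G v := by
  obtain ⟨w, hw⟩ := exists_nbr hG hk hc2 v
  by_cases h : ∀ x, G.Adj v x → x = w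
  · exact Or.inl ⟨w, hw, h⟩
  · push_neg at h
    obtain ⟨x, hx, hxw⟩ := h
    exact Or.inr ⟨x, w, hxw, hx, hw⟩

lemma leaf_start {u w t : V} (hL : IsLeafAt G u w) (p : G.Walk u t) (hp : p.length ≠ 0) :
    ∃ (h : G.Adj u w) (q : G.Walk w t), p = Walk.cons h q := by
  cases p with
  | nil => simp at hp
  | cons h q =>
    have hx := hL.2 _ h
    subst hx
    exact ⟨h, q, rfl⟩

lemma hub_other_nbr [Fintype V] (hG : IsCkSemisaturated k G) (hk : 6 ≤ k)
    (hc3 : 3 ≤ Fintype.card V) {u w : V} (hL : IsLeafAt G u w) :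
    ∃ y, G.Adj w y ∧ y ≠ u := by
  by_contra hcon
  push_neg at hcon
  have hex : ∃ t, t ≠ u ∧ t ≠ w := by
    by_contra h
    push_neg at h
    have hsub : (Finset.univ : Finset V) ⊆ {u, w} := by
      intro t _
      rcases eq_or_ne t u with rfl | htu
      · simp
      · simp [h t htu]
    have := Finset.card_le_card hsub
    have h2 : ({u, w} : Finset V).card ≤ 2 := Finset.card_insert_le _ _ |>.trans (by simp)
    rw [Finset.card_univ] at this
    omega
  obtain ⟨t, htu, htw⟩ := hex
  have hadj : ¬ G.Adj u t := fun h => htw (hL.2 t h)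
  obtain ⟨p, hp, hplen⟩ := exists_path hG (Ne.symm htu) hadj
  obtain ⟨h1, q, rfl⟩ := leaf_start hL p (by omega)
  rw [Walk.length_cons] at hplen
  cases q with
  | nil => exact htw rfl
  | cons h2 q2 =>
    have hz := hcon _ h2
    have hmem : u ∈ (Walk.cons h2 q2).support := by
      rw [Walk.support_cons]
      exact List.mem_cons_of_mem _ (hz ▸ q2.start_mem_support)
    exact ((Walk.cons_isPath_iff h1 _).mp hp).2 hmem

lemma leaf_nbr_unique (hG : IsCkSemisaturated k G) (hk : 6 ≤ k) {u u' w : V}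
    (h1 : IsLeafAt G u w) (h2 : IsLeafAt G u' w) : u = u' := by
  by_contra hne
  have hadj : ¬ G.Adj u u' := by
    intro h
    have := h1.2 _ h
    subst this
    exact h2.1.ne rfl
  obtain ⟨p, hp, hplen⟩ := exists_path hG hne hadj
  obtain ⟨ha, q, rfl⟩ := leaf_start h1 p (by omega)
  rw [Walk.length_cons] at hplen
  obtain ⟨hb, r, hr⟩ := leaf_start h2 q.reverse (by rw [Walk.length_reverse]; omega)
  have hrpath : r.IsPath := by
    have h3 := (hp.of_cons).reverse
    rw [hr] at h3
    exact h3.of_cons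
  have hrnil : r = Walk.nil := (Walk.isPath_iff_eq_nil (p := r)).mp hrpath
  have : q.reverse.length = 1 := by rw [hr, hrnil]; simp
  rw [Walk.length_reverse] at this
  omega

lemma hub_short_cycle [Fintype V] (hG : IsCkSemisaturated k G) (hk : 6 ≤ k)
    (hc3 : 3 ≤ Fintype.card V) {u w : V} (hL : IsLeafAt G u w) :
    ∃ c : G.Walk w w, c.IsCycle ∧ c.length + 1 = k := by
  obtain ⟨y, hwy, hyu⟩ := hub_other_nbr hG hk hc3 hL
  have hadj : ¬ G.Adj u y := by
    intro h
    have := hL.2 y h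
    subst this
    exact hwy.ne rfl
  obtain ⟨p, hp, hplen⟩ := exists_path hG (Ne.symm hyu) hadj
  obtain ⟨ha, R, rfl⟩ := leaf_start hL p (by omega)
  have hR : R.IsPath := hp.of_cons
  rw [Walk.length_cons] at hplen
  have hwyR : s(w, y) ∉ R.edges := by
    intro hmem
    have := path_end_edge R hR hmem
    omega
  refine ⟨Walk.cons hwy R.reverse, ?_, ?_⟩
  · rw [Walk.cons_isCycle_iff]
    refine ⟨hR.reverse, ?_⟩
    rw [Walk.edges_reverse, List.mem_reverse]
    exact hwyR
  · rw [Walk.length_cons, Walk.length_reverse]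
    omega

lemma deg2_cycle (hG : IsCkSemisaturated k G) (hk : 6 ≤ k) {v x y : V}
    (hxy : x ≠ y) (hx : G.Adj v x) (hy : G.Adj v y) :
    ∃ c : G.Walk v v, c.IsCycle ∧ c.length ≤ k + 1 := by
  by_cases hadj : G.Adj x y
  · refine ⟨Walk.cons hx (Walk.cons hadj (Walk.cons hy.symm Walk.nil)), ?_, by simp; omega⟩
    rw [Walk.cons_isCycle_iff]
    constructor
    · rw [Walk.cons_isPath_iff]
      refine ⟨?_, ?_⟩
      · rw [Walk.cons_isPath_iff]
        refine ⟨Walk.IsPath.nil, ?_⟩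
        simp [hy.ne']
      · simp [hxy, hx.ne']
    · simp only [Walk.edges_cons, Walk.edges_nil, List.mem_cons, List.not_mem_nil, or_false]
      push_neg
      constructor
      · intro hcon
        rcases Sym2.eq_iff.mp hcon with ⟨h1, h2⟩ | ⟨h1, h2⟩
        · exact hx.ne h1
        · exact hy.ne h1
      · intro hcon
        rcases Sym2.eq_iff.mp hcon with ⟨h1, h2⟩ | ⟨h1, h2⟩
        · exact hy.ne h1
        · exact hxy h2
  · obtain ⟨P, hP, hPlen⟩ := exists_path hG hxy hadj
    by_cases hvP : v ∈ P.support
    · have ht1 : (P.takeUntil v hvP).length ≠ 0 := by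
        intro h0
        exact hx.ne' (Walk.eq_of_length_eq_zero h0)
      have hsum : (P.takeUntil v hvP).length + (P.dropUntil v hvP).length = P.length := by
        have := congrArg Walk.length (P.take_spec hvP)
        rwa [Walk.length_append] at this
      by_cases h2 : 2 ≤ (P.takeUntil v hvP).length
      · refine ⟨Walk.cons hx (P.takeUntil v hvP), ?_, ?_⟩
        · rw [Walk.cons_isCycle_iff]
          refine ⟨hP.takeUntil hvP, ?_⟩
          intro hmem
          rw [Sym2.eq_swap] at hmem
          have := path_end_edge _ (hP.takeUntil hvP) hmem
          omega
        · rw [Walk.length_cons]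
          have := P.length_takeUntil_le hvP
          omega
      · refine ⟨Walk.cons hy ((P.dropUntil v hvP).reverse), ?_, ?_⟩
        · rw [Walk.cons_isCycle_iff]
          refine ⟨(hP.dropUntil hvP).reverse, ?_⟩
          rw [Walk.edges_reverse, List.mem_reverse]
          intro hmem
          have := path_end_edge _ (hP.dropUntil hvP) hmem
          omega
        · rw [Walk.length_cons, Walk.length_reverse]
          omega
    · refine ⟨Walk.cons hx (P.concat hy.symm), ?_, ?_⟩
      · rw [Walk.cons_isCycle_iff]
        constructor
        · rw [← Walk.isPath_reverse_iff, Walk.reverse_concat]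
          rw [Walk.cons_isPath_iff]
          exact ⟨hP.reverse, by rwa [Walk.support_reverse, List.mem_reverse]⟩
        · rw [Walk.edges_concat]
          simp only [List.concat_eq_append, List.mem_append, List.mem_singleton]
          push_neg
          constructor
          · intro hmem
            exact hvP (mem_support_of_mem_edge P hmem (Sym2.mem_mk_left _ _))
          · intro hcon
            rcases Sym2.eq_iff.mp hcon with ⟨h1, h2⟩ | ⟨h1, h2⟩
            · exact hy.ne h1
            · exact hxy h2
      · rw [Walk.length_cons, Walk.length_concat]
        omega

end Semi

end CkHelp
section Part3

open SimpleGraph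

variable {V : Type*} [Fintype V] [DecidableEq V]

lemma CkHelp.conn_card_le : ∀ (m : ℕ) (G : SimpleGraph V), G.edgeSet.ncard = m →
    G.Connected → Fintype.card V ≤ m + 1 := by
  intro m
  induction m using Nat.strong_induction_on with
  | _ m ih =>
    intro G hm hc
    by_cases ha : G.IsAcyclic
    · have htree : G.IsTree := ⟨hc, ha⟩
      haveI : Fintype G.edgeSet := G.edgeSet.toFinite.fintype
      have hcf := htree.card_edgeFinset
      have hcard : G.edgeFinset.card = m := by
        rw [← hm, Set.ncard_eq_toFinset_card']
        simp [SimpleGraph.edgeFinset]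
      omega
    · unfold SimpleGraph.IsAcyclic at ha
      push_neg at ha
      obtain ⟨v, c, hcyc⟩ := ha
      have h3 := hcyc.three_le_length
      have hene : c.edges ≠ [] := by
        intro h0
        have hle := c.length_edges
        rw [h0] at hle
        simp only [List.length_nil] at hle
        omega
      obtain ⟨e, he⟩ := List.exists_mem_of_ne_nil _ hene
      induction e using Sym2.ind with
      | _ α β =>
        have hmemE : s(α, β) ∈ G.edgeSet := c.edges_subset_edgeSet he
        have hreach : (G \ fromEdgeSet {s(α, β)}).Reachable α β :=
          (adj_and_reachable_delete_edges_iff_exists_cycle.mpr ⟨v, c, hcyc, he⟩).2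
        have hdel : G.deleteEdges {s(α, β)} = G \ fromEdgeSet {s(α, β)} := rfl
        have hreach' : (G.deleteEdges {s(α, β)}).Reachable α β := by rw [hdel]; exact hreach
        have hprec : (G.deleteEdges {s(α, β)}).Preconnected := by
          intro a b
          obtain ⟨w⟩ := hc.preconnected a b
          refine CkHelp.lift_walk w ?_
          intro x y hxy
          by_cases hS : s(x, y) = s(α, β)
          · rcases Sym2.eq_iff.mp hS with ⟨rfl, rfl⟩ | ⟨rfl, rfl⟩
            · exact hreach'
            · exact hreach'.symm
          · refine (SimpleGraph.deleteEdges_adj.mpr ⟨w.adj_of_mem_edges hxy, ?_⟩).reachable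
            simpa using hS
        have hconn : (G.deleteEdges {s(α, β)}).Connected := by
          rw [SimpleGraph.connected_iff]
          exact ⟨hprec, hc.nonempty⟩
        have hfin : G.edgeSet.Finite := Set.toFinite _
        have hmpos : 0 < m := by
          rw [← hm]
          exact Set.ncard_pos hfin |>.mpr ⟨_, hmemE⟩
        have hncard : (G.deleteEdges {s(α, β)}).edgeSet.ncard = m - 1 := by
          rw [SimpleGraph.edgeSet_deleteEdges]
          have : G.edgeSet \ {s(α, β)} = G.edgeSet \ {s(α, β)} := rfl
          rw [show (G.edgeSet \ {s(α, β)} : Set (Sym2 V)) = G.edgeSet \ {s(α, β)} from rfl]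
          rw [Set.ncard_diff_singleton_of_mem hmemE, hm]
        have := ih (m - 1) (by omega) _ hncard hconn
        omega

end Part3
section Part4

open SimpleGraph

/-- A cycle in `G` of length at most `k+1`, packaged with a basepoint. -/
structure CkCyc {V : Type*} (G : SimpleGraph V) (k : ℕ) where
  base : V
  walk : G.Walk base base
  cyc : walk.IsCycle
  len : walk.length ≤ k + 1

namespace CkHelp

set_option linter.unusedSectionVars false

variable {V : Type*} [Fintype V] [DecidableEq V] {k : ℕ} {G : SimpleGraph V}

lemma closed_support_card {w : V} (c : G.Walk w w) (hlen : c.length ≠ 0) :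
    c.support.toFinset.card ≤ c.length := by
  cases c with
  | nil => simp at hlen
  | cons h q =>
    rw [Walk.support_cons, List.toFinset_cons]
    have hmem : w ∈ q.support.toFinset := List.mem_toFinset.mpr q.end_mem_support
    rw [Finset.insert_eq_self.mpr hmem]
    calc q.support.toFinset.card ≤ q.support.length := q.support.toFinset_card_le
    _ = q.length + 1 := q.length_support
    _ = (Walk.cons h q).length := (Walk.length_cons h q).symm

lemma main_count (hG : IsCkSemisaturated k G) (hk : 6 ≤ k)
    (hc3 : 3 ≤ Fintype.card V) :
    ∃ t : ℕ, Fintype.card V ≤ (2 * k - 2) * t ∧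
      Fintype.card V + t ≤ G.edgeSet.ncard + 1 := by
  classical
  -- the requirement predicate on families of short cycles
  set R : Finset (CkCyc G k) → Prop := fun F =>
    (∀ v : V, TwoPlus G v → ∃ C ∈ F, v ∈ C.walk.support) ∧
    (∀ w : V, (∃ u, IsLeafAt G u w) →
      ∃ C ∈ F, w ∈ C.walk.support ∧ C.walk.length + 1 ≤ k) with hRdef
  -- existence of a family satisfying R
  have hex : ∃ F, R F := by
    have h1 : ∀ v : V, TwoPlus G v → ∃ C : CkCyc G k, v ∈ C.walk.support := by
      rintro v ⟨x, y, hxy, hx, hy⟩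
      obtain ⟨c, hc, hcl⟩ := deg2_cycle hG hk hxy hx hy
      exact ⟨⟨v, c, hc, hcl⟩, c.start_mem_support⟩
    have h2 : ∀ w : V, (∃ u, IsLeafAt G u w) →
        ∃ C : CkCyc G k, w ∈ C.walk.support ∧ C.walk.length + 1 ≤ k := by
      rintro w ⟨u, hL⟩
      obtain ⟨c, hc, hcl⟩ := hub_short_cycle hG hk hc3 hL
      have hA : c.length ≤ k + 1 := by omega
      have hB : c.length + 1 ≤ k := by omega
      exact ⟨⟨w, c, hc, hA⟩, c.start_mem_support, hB⟩
    choose f hf using h1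
    choose g hg1 hg2 using h2
    refine ⟨(Finset.univ.biUnion fun v : V =>
        if h : TwoPlus G v then {f v h} else ∅) ∪
      (Finset.univ.biUnion fun w : V =>
        if h : ∃ u, IsLeafAt G u w then {g w h} else ∅), ?_, ?_⟩
    · intro v hv
      refine ⟨f v hv, ?_, hf v hv⟩
      apply Finset.mem_union_left
      refine Finset.mem_biUnion.mpr ⟨v, Finset.mem_univ _, ?_⟩
      rw [dif_pos hv]
      exact Finset.mem_singleton_self _
    · intro w hw
      refine ⟨g w hw, ?_, hg1 w hw, hg2 w hw⟩
      apply Finset.mem_union_right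
      refine Finset.mem_biUnion.mpr ⟨w, Finset.mem_univ _, ?_⟩
      rw [dif_pos hw]
      exact Finset.mem_singleton_self _
  -- a minimum-cardinality family
  obtain ⟨F₀, hF₀⟩ := hex
  set Msk : Set ℕ := {m : ℕ | ∃ F, R F ∧ F.card = m} with hMsk
  have hne : Msk.Nonempty := ⟨F₀.card, F₀, hF₀, rfl⟩
  obtain ⟨F, hRF, hFc⟩ := Nat.sInf_mem hne
  have hmin : ∀ C ∈ F, ¬ R (F.erase C) := by
    intro C hC hRE
    have hle : sInf Msk ≤ (F.erase C).card :=
      Nat.sInf_le (show (F.erase C).card ∈ Msk from ⟨F.erase C, hRE, rfl⟩)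
    rw [← hFc] at hle
    rw [Finset.card_erase_of_mem hC] at hle
    have hpos : 0 < F.card := Finset.card_pos.mpr ⟨C, hC⟩
    omega
  -- each member of the family has a private witness vertex
  have hwit : ∀ C ∈ F, ∃ x : V, x ∈ C.walk.support ∧
      ((∀ D ∈ F, D ≠ C → x ∉ D.walk.support) ∨
       (C.walk.length + 1 ≤ k ∧
        ∀ D ∈ F, D ≠ C → ¬(x ∈ D.walk.support ∧ D.walk.length + 1 ≤ k))) := by
    intro C hC
    have hnotR := hmin C hC
    by_cases hA : ∀ v : V, TwoPlus G v → ∃ D ∈ F.erase C, v ∈ D.walk.support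
    · have hB : ¬ ∀ w : V, (∃ u, IsLeafAt G u w) →
          ∃ D ∈ F.erase C, w ∈ D.walk.support ∧ D.walk.length + 1 ≤ k :=
        fun hB => hnotR ⟨hA, hB⟩
      push_neg at hB
      obtain ⟨w, hw, hall⟩ := hB
      obtain ⟨C', hC', hmem, hshort⟩ := hRF.2 w hw
      have hCC : C' = C := by
        by_contra hne'
        have := hall C' (Finset.mem_erase.mpr ⟨hne', hC'⟩) hmem
        omega
      subst hCC
      refine ⟨w, hmem, Or.inr ⟨hshort, ?_⟩⟩
      intro D hD hDC hcon
      have := hall D (Finset.mem_erase.mpr ⟨hDC, hD⟩) hcon.1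
      have h2 := hcon.2
      omega
    · push_neg at hA
      obtain ⟨v, hv, hall⟩ := hA
      obtain ⟨C', hC', hmem⟩ := hRF.1 v hv
      have hCC : C' = C := by
        by_contra hne'
        exact hall C' (Finset.mem_erase.mpr ⟨hne', hC'⟩) hmem
      subst hCC
      refine ⟨v, hmem, Or.inl ?_⟩
      intro D hD hDC
      exact hall D (Finset.mem_erase.mpr ⟨hDC, hD⟩)
  choose wit hwit1 hwit2 using hwit
  have hedge : ∀ C (hC : C ∈ F), ∃ z, s(wit C hC, z) ∈ C.walk.edges :=
    fun C hC => edge_at C.walk C.cyc (hwit1 C hC)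
  choose zed hzed using hedge
  set ε : {x // x ∈ F} → Sym2 V := fun C => s(wit C.1 C.2, zed C.1 C.2) with hεdef
  set S : Finset (Sym2 V) := F.attach.image ε with hSdef
  -- injectivity of ε
  have hinj : Set.InjOn ε ↑F.attach := by
    intro C hCa D hDa heq
    by_contra hne'
    have hne1 : C.1 ≠ D.1 := fun h => hne' (Subtype.ext h)
    have hεC : ε C ∈ C.1.walk.edges := hzed C.1 C.2
    have hεD : ε D ∈ D.1.walk.edges := hzed D.1 D.2
    have hwDC : wit D.1 D.2 ∈ C.1.walk.support := by
      refine mem_support_of_mem_edge C.1.walk (heq ▸ hεC) ?_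
      exact Sym2.mem_mk_left _ _
    have hwCD : wit C.1 C.2 ∈ D.1.walk.support := by
      refine mem_support_of_mem_edge D.1.walk (heq ▸ hεD) ?_
      exact Sym2.mem_mk_left _ _
    rcases hwit2 C.1 C.2 with hpriv | ⟨hCshort, hpriv⟩
    · exact hpriv D.1 D.2 hne1.symm hwCD
    · rcases hwit2 D.1 D.2 with hprivD | ⟨hDshort, hprivD⟩
      · exact hprivD C.1 C.2 hne1 hwDC
      · exact hprivD C.1 C.2 hne1 ⟨hwDC, hCshort⟩
  have hScard : S.card = F.card := by
    rw [hSdef, Finset.card_image_of_injOn hinj, Finset.card_attach]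
  set H := G.deleteEdges ↑S with hHdef
  -- private edges of short cycles are good
  have hshortgood : ∀ C : {x // x ∈ F}, C.1.walk.length + 1 ≤ k →
      H.Reachable (wit C.1 C.2) (zed C.1 C.2) := by
    intro C hCs
    obtain ⟨p, hp, hplen, hpe⟩ := cycle_edge_path C.1.walk C.1.cyc (hzed C.1 C.2)
    refine lift_walk p ?_
    intro x y hxy
    refine (SimpleGraph.deleteEdges_adj.mpr ⟨p.adj_of_mem_edges hxy, ?_⟩).reachable
    intro hmemS
    obtain ⟨D, hD, hDeq⟩ := Finset.mem_image.mp (Finset.mem_coe.mp hmemS)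
    have hxyC := hpe _ hxy
    have hDC : D ≠ C := by
      rintro rfl
      exact hxyC.2 hDeq.symm
    have hDC1 : D.1 ≠ C.1 := fun h => hDC (Subtype.ext h)
    have hwitDC : wit D.1 D.2 ∈ C.1.walk.support := by
      refine mem_support_of_mem_edge C.1.walk (hDeq ▸ hxyC.1) (Sym2.mem_mk_left _ _)
    rcases hwit2 D.1 D.2 with hprivD | ⟨hDshort, hprivD⟩
    · exact hprivD C.1 C.2 hDC1.symm hwitDC
    · exact hprivD C.1 C.2 hDC1.symm ⟨hwitDC, hCs⟩
  have hallgood : ∀ C : {x // x ∈ F},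
      H.Reachable (wit C.1 C.2) (zed C.1 C.2) := by
    intro C
    by_cases hCs : C.1.walk.length + 1 ≤ k
    · exact hshortgood C hCs
    have hpriv : ∀ D ∈ F, D ≠ C.1 → wit C.1 C.2 ∉ D.walk.support := by
      rcases hwit2 C.1 C.2 with h | ⟨hs, -⟩
      · exact h
      · exact absurd hs hCs
    obtain ⟨p, hp, hplen, hpe⟩ := cycle_edge_path C.1.walk C.1.cyc (hzed C.1 C.2)
    refine lift_walk p ?_
    intro x y hxy
    by_cases hmemS : s(x, y) ∈ (↑S : Set (Sym2 V))
    · obtain ⟨D, hD, hDeq⟩ := Finset.mem_image.mp (Finset.mem_coe.mp hmemS)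
      have hxyC := hpe _ hxy
      have hDC : D ≠ C := by
        rintro rfl
        exact hxyC.2 hDeq.symm
      have hDC1 : D.1 ≠ C.1 := fun h => hDC (Subtype.ext h)
      have hwitDC : wit D.1 D.2 ∈ C.1.walk.support := by
        refine mem_support_of_mem_edge C.1.walk (hDeq ▸ hxyC.1) (Sym2.mem_mk_left _ _)
      have hDshort : D.1.walk.length + 1 ≤ k := by
        rcases hwit2 D.1 D.2 with hprivD | ⟨hDshort, -⟩
        · exact absurd hwitDC (hprivD C.1 C.2 hDC1.symm)
        · exact hDshort
      have hreachD := hshortgood D hDshort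
      rcases Sym2.eq_iff.mp hDeq with ⟨h1, h2⟩ | ⟨h1, h2⟩
      · rw [← h1, ← h2]; exact hreachD
      · rw [← h1, ← h2]; exact hreachD.symm
    · exact (SimpleGraph.deleteEdges_adj.mpr ⟨p.adj_of_mem_edges hxy, hmemS⟩).reachable
  -- H is connected
  have hprec : H.Preconnected := by
    intro a b
    obtain ⟨w⟩ := semi_preconnected hG a b
    refine lift_walk w ?_
    intro x y hxy
    by_cases hmemS : s(x, y) ∈ (↑S : Set (Sym2 V))
    · obtain ⟨D, hD, hDeq⟩ := Finset.mem_image.mp (Finset.mem_coe.mp hmemS)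
      have hreachD := hallgood D
      rcases Sym2.eq_iff.mp hDeq with ⟨h1, h2⟩ | ⟨h1, h2⟩
      · rw [← h1, ← h2]; exact hreachD
      · rw [← h1, ← h2]; exact hreachD.symm
    · exact (SimpleGraph.deleteEdges_adj.mpr ⟨w.adj_of_mem_edges hxy, hmemS⟩).reachable
  have hHconn : H.Connected := by
    rw [SimpleGraph.connected_iff]
    have : Nonempty V := Fintype.card_pos_iff.mp (by omega)
    exact ⟨hprec, this⟩
  -- edge counting
  have hSsub : (↑S : Set (Sym2 V)) ⊆ G.edgeSet := by
    intro e he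
    obtain ⟨D, hD, hDeq⟩ := Finset.mem_image.mp (Finset.mem_coe.mp he)
    rw [← hDeq]
    exact D.1.walk.edges_subset_edgeSet (hzed D.1 D.2)
  have hGfin : G.edgeSet.Finite := Set.toFinite _
  have hHcard : H.edgeSet.ncard = G.edgeSet.ncard - S.card := by
    rw [hHdef, SimpleGraph.edgeSet_deleteEdges, Set.ncard_diff hSsub (Set.toFinite _),
      Set.ncard_coe_finset]
  have hSle : S.card ≤ G.edgeSet.ncard := by
    have := Set.ncard_le_ncard hSsub hGfin
    rwa [Set.ncard_coe_finset] at this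
  have hVbound := conn_card_le H.edgeSet.ncard H rfl hHconn
  rw [hHcard] at hVbound
  -- vertex counting
  set cover : CkCyc G k → Finset V := fun C =>
    C.walk.support.toFinset ∪
      (if C.walk.length + 1 ≤ k then
        Finset.univ.filter (fun u => ∃ w, IsLeafAt G u w ∧ w ∈ C.walk.support)
      else ∅) with hcoverdef
  have hcover : Finset.univ ⊆ F.biUnion cover := by
    intro v hvu
    rcases leaf_or_two hG (by omega) (by omega) v with ⟨w, hL⟩ | hTP
    · obtain ⟨C, hC, hmem, hshort⟩ := hRF.2 w ⟨v, hL⟩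
      refine Finset.mem_biUnion.mpr ⟨C, hC, Finset.mem_union_right _ ?_⟩
      rw [if_pos hshort]
      simp only [Finset.mem_filter, Finset.mem_univ, true_and]
      exact ⟨w, hL, hmem⟩
    · obtain ⟨C, hC, hmem⟩ := hRF.1 v hTP
      exact Finset.mem_biUnion.mpr
        ⟨C, hC, Finset.mem_union_left _ (List.mem_toFinset.mpr hmem)⟩
  have hsupp : ∀ C : CkCyc G k, C.walk.support.toFinset.card ≤ C.walk.length :=
    fun C => closed_support_card C.walk (by have := C.cyc.three_le_length; omega)
  have hpend : ∀ C : CkCyc G k,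
      (Finset.univ.filter (fun u => ∃ w, IsLeafAt G u w ∧ w ∈ C.walk.support)).card ≤
        C.walk.support.toFinset.card := by
    intro C
    set P := Finset.univ.filter (fun u => ∃ w, IsLeafAt G u w ∧ w ∈ C.walk.support) with hP
    have hhub : ∀ u ∈ P, ∃ w, IsLeafAt G u w ∧ w ∈ C.walk.support := by
      intro u hu
      rw [hP, Finset.mem_filter] at hu
      exact hu.2
    choose hubf hhub1 hhub2 using hhub
    set f : V → V := fun u => if hu : u ∈ P then hubf u hu else u with hf
    refine Finset.card_le_card_of_injOn f ?_ ?_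
    · intro u hu
      simp only [hf]
      rw [Finset.mem_coe, dif_pos (show u ∈ P from hu)]
      exact List.mem_toFinset.mpr (hhub2 u hu)
    · intro u hu u' hu' heq
      have hu2 : u ∈ P := hu
      have hu2' : u' ∈ P := hu'
      simp only [hf] at heq
      rw [dif_pos hu2, dif_pos hu2'] at heq
      exact leaf_nbr_unique hG hk (hhub1 u hu2) (heq ▸ hhub1 u' hu2')
  have hcovcard : ∀ C ∈ F, (cover C).card ≤ 2 * k - 2 := by
    intro C hCF
    simp only [hcoverdef]
    by_cases hCs : C.walk.length + 1 ≤ k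
    · rw [if_pos hCs]
      calc (C.walk.support.toFinset ∪ _).card ≤
          C.walk.support.toFinset.card +
            (Finset.univ.filter
              (fun u => ∃ w, IsLeafAt G u w ∧ w ∈ C.walk.support)).card :=
            Finset.card_union_le _ _
        _ ≤ C.walk.length + C.walk.support.toFinset.card := by
            have := hsupp C
            have := hpend C
            omega
        _ ≤ 2 * k - 2 := by
            have := hsupp C
            omega
    · rw [if_neg hCs]
      rw [Finset.union_empty]
      have h1 := hsupp C
      have h2 := C.len
      omega
  have hVcount : Fintype.card V ≤ (2 * k - 2) * F.card := by
    calc Fintype.card V = Finset.univ.card := (Finset.card_univ (α := V)).symm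
      _ ≤ (F.biUnion cover).card := Finset.card_le_card hcover
      _ ≤ ∑ C ∈ F, (cover C).card := Finset.card_biUnion_le
      _ ≤ ∑ _C ∈ F, (2 * k - 2) := Finset.sum_le_sum hcovcard
      _ = F.card * (2 * k - 2) := by rw [Finset.sum_const, smul_eq_mul]
      _ = (2 * k - 2) * F.card := Nat.mul_comm _ _
  exact ⟨F.card, hVcount, by omega⟩

end CkHelp

end Part4

theorem stmt_8 (n k : ℕ) (hk : 6 ≤ k) (hkn : k ≤ n) :
    (∀ G : SimpleGraph (Fin n), IsCkSemisaturated k G →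
      (1 + 1 / (2 * (k : ℝ) - 2)) * (n : ℝ) - 2 < (G.edgeSet.ncard : ℝ)) ∧
    (1 + 1 / (2 * (k : ℝ) - 2)) * (n : ℝ) - 2 < (ssatNum n k : ℝ) := by
  have hmain : ∀ G : SimpleGraph (Fin n), IsCkSemisaturated k G →
      (1 + 1 / (2 * (k : ℝ) - 2)) * (n : ℝ) - 2 < (G.edgeSet.ncard : ℝ) := by
    intro G hG
    have hc3 : 3 ≤ Fintype.card (Fin n) := by rw [Fintype.card_fin]; omega
    obtain ⟨t, h1, h2⟩ := CkHelp.main_count hG hk hc3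
    rw [Fintype.card_fin] at h1 h2
    have hK : (0:ℝ) < 2 * (k:ℝ) - 2 := by
      have h6 : (6:ℝ) ≤ (k:ℝ) := by exact_mod_cast hk
      linarith
    have hcast : ((2 * k - 2 : ℕ) : ℝ) = 2 * (k:ℝ) - 2 := by
      have h2k : (2:ℕ) ≤ 2 * k := by omega
      push_cast [Nat.cast_sub h2k]
      ring
    have h1R : (n:ℝ) ≤ (2 * (k:ℝ) - 2) * (t:ℝ) := by
      calc (n:ℝ) ≤ (((2 * k - 2) * t : ℕ) : ℝ) := by exact_mod_cast h1
        _ = ((2 * k - 2 : ℕ) : ℝ) * (t:ℝ) := by push_cast; ring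
        _ = (2 * (k:ℝ) - 2) * (t:ℝ) := by rw [hcast]
    have h2R : (n:ℝ) + (t:ℝ) ≤ (G.edgeSet.ncard : ℝ) + 1 := by exact_mod_cast h2
    have htR : (n:ℝ) / (2 * (k:ℝ) - 2) ≤ (t:ℝ) := by
      rw [div_le_iff₀ hK]
      linarith [h1R]
    have hEq : (1 + 1 / (2 * (k : ℝ) - 2)) * (n : ℝ) - 2
        = (n:ℝ) + (n:ℝ) / (2 * (k:ℝ) - 2) - 2 := by
      field_simp
    linarith [h2R, htR, hEq]
  refine ⟨hmain, ?_⟩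
  have hTop : IsCkSemisaturated k (⊤ : SimpleGraph (Fin n)) := by
    intro u v hne hadj
    exact absurd hne (by simpa using hadj)
  have hne : {m : ℕ | ∃ G : SimpleGraph (Fin n),
      IsCkSemisaturated k G ∧ G.edgeSet.ncard = m}.Nonempty :=
    ⟨_, ⊤, hTop, rfl⟩
  obtain ⟨G₀, hG₀, hcard⟩ := Nat.sInf_mem hne
  unfold ssatNum
  rw [← hcard]
  exact hmain G₀ hG₀
end

section
/- Let G be a connected graph on n vertices in which every vertex is contained in a cycle of length at most k+1. Then e(G) ≥ (n−1)·(k+2)/(k+1). -/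
open SimpleGraph

namespace Stmt13Aux

set_option linter.unusedSectionVars false

variable {V : Type*} [Fintype V]

/-- Number of connected components. -/
noncomputable def cnum (H : SimpleGraph V) : ℕ := Nat.card H.ConnectedComponent

/-- Number of edges. -/
noncomputable def enum (H : SimpleGraph V) : ℕ := H.edgeSet.ncard

/-- Edges plus components; monotone under adding edges. -/
noncomputable def sig (H : SimpleGraph V) : ℕ := enum H + cnum H

lemma reach_add {H : SimpleGraph V} {a b : V} :
    ∀ {x y : V}, (H ⊔ fromEdgeSet {s(a,b)}).Walk x y →
    H.Reachable x y ∨ (H.Reachable x a ∧ H.Reachable b y) ∨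
      (H.Reachable x b ∧ H.Reachable a y) := by
  intro x y w
  induction w with
  | nil => exact Or.inl (Reachable.refl _)
  | cons h p ih =>
    rw [sup_adj, fromEdgeSet_adj] at h
    rcases h with hH | ⟨hs, hne⟩
    · rcases ih with h1 | ⟨h1, h2⟩ | ⟨h1, h2⟩
      · exact Or.inl (hH.reachable.trans h1)
      · exact Or.inr (Or.inl ⟨hH.reachable.trans h1, h2⟩)
      · exact Or.inr (Or.inr ⟨hH.reachable.trans h1, h2⟩)
    · rw [Set.mem_singleton_iff, Sym2.eq_iff] at hs
      rcases hs with ⟨rfl, rfl⟩ | ⟨rfl, rfl⟩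
      · rcases ih with h1 | ⟨h1, h2⟩ | ⟨h1, h2⟩
        · exact Or.inr (Or.inl ⟨Reachable.refl _, h1⟩)
        · exact Or.inl (h1.symm.trans h2)
        · exact Or.inl h2
      · rcases ih with h1 | ⟨h1, h2⟩ | ⟨h1, h2⟩
        · exact Or.inr (Or.inr ⟨Reachable.refl _, h1⟩)
        · exact Or.inl h2
        · exact Or.inl (h1.symm.trans h2)

/-- The induced map on connected components. -/
noncomputable def cmap {H K : SimpleGraph V} (hle : H ≤ K) :
    H.ConnectedComponent → K.ConnectedComponent :=
  ConnectedComponent.map (Hom.ofLE hle)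

lemma cmap_mk {H K : SimpleGraph V} (hle : H ≤ K) (v : V) :
    cmap hle (H.connectedComponentMk v) = K.connectedComponentMk v :=
  ConnectedComponent.map_mk _ _

lemma cmap_surjective {H K : SimpleGraph V} (hle : H ≤ K) :
    Function.Surjective (cmap hle) := by
  intro C
  refine C.ind (fun v => ⟨H.connectedComponentMk v, cmap_mk hle v⟩)

lemma cnum_le_of_le {H K : SimpleGraph V} (hle : H ≤ K) : cnum K ≤ cnum H :=
  Nat.card_le_card_of_surjective (cmap hle) (cmap_surjective hle)

lemma cnum_le_add_one {H : SimpleGraph V} {a b : V} :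
    cnum H ≤ cnum (H ⊔ fromEdgeSet {s(a,b)}) + 1 := by
  classical
  set K := H ⊔ fromEdgeSet {s(a,b)} with hK
  have hle : H ≤ K := le_sup_left
  have huniv : (Set.univ : Set H.ConnectedComponent)
      = insert (H.connectedComponentMk b) {A | A ≠ H.connectedComponentMk b} := by
    ext A
    by_cases h : A = H.connectedComponentMk b <;> simp [h]
  have hinj : Set.InjOn (cmap hle) {A | A ≠ H.connectedComponentMk b} := by
    rintro A hA B hB hAB
    obtain ⟨x, rfl⟩ := A.exists_rep
    obtain ⟨y, rfl⟩ := B.exists_rep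
    rw [show (Quot.mk _ x : H.ConnectedComponent) = H.connectedComponentMk x from rfl,
      cmap_mk, show (Quot.mk _ y : H.ConnectedComponent) = H.connectedComponentMk y from rfl,
      cmap_mk] at hAB
    have hreach : K.Reachable x y := ConnectedComponent.exact hAB
    obtain ⟨p⟩ := hreach
    rcases reach_add p with h1 | ⟨h1, h2⟩ | ⟨h1, h2⟩
    · exact ConnectedComponent.sound h1
    · exact absurd (ConnectedComponent.sound h2.symm) hB
    · exact absurd (ConnectedComponent.sound h1) hA
  calc cnum H = (Set.univ : Set H.ConnectedComponent).ncard := (Set.ncard_univ _).symm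
    _ ≤ {A | A ≠ H.connectedComponentMk b}.ncard + 1 := by
        rw [huniv]; exact Set.ncard_insert_le _ _
    _ ≤ (Set.univ : Set K.ConnectedComponent).ncard + 1 := by
        gcongr
        exact Set.ncard_le_ncard_of_injOn (cmap hle) (fun A _ => Set.mem_univ _) hinj
          Set.finite_univ
    _ = cnum K + 1 := by rw [Set.ncard_univ]; rfl

lemma cnum_le_of_reach {H : SimpleGraph V} {a b : V} (hab : H.Reachable a b) :
    cnum H ≤ cnum (H ⊔ fromEdgeSet {s(a,b)}) := by
  classical
  set K := H ⊔ fromEdgeSet {s(a,b)} with hK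
  have hle : H ≤ K := le_sup_left
  have hinj : Function.Injective (cmap hle) := by
    intro A B hAB
    obtain ⟨x, rfl⟩ := A.exists_rep
    obtain ⟨y, rfl⟩ := B.exists_rep
    rw [show (Quot.mk _ x : H.ConnectedComponent) = H.connectedComponentMk x from rfl,
      cmap_mk, show (Quot.mk _ y : H.ConnectedComponent) = H.connectedComponentMk y from rfl,
      cmap_mk] at hAB
    obtain ⟨p⟩ := ConnectedComponent.exact hAB
    rcases reach_add p with h1 | ⟨h1, h2⟩ | ⟨h1, h2⟩
    · exact ConnectedComponent.sound h1
    · exact ConnectedComponent.sound ((h1.trans hab).trans h2)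
    · exact ConnectedComponent.sound ((h1.trans hab.symm).trans h2)
  exact Nat.card_le_card_of_injective (cmap hle) hinj

lemma edgeSet_sup_single {H : SimpleGraph V} {a b : V} (hab : a ≠ b) :
    (H ⊔ fromEdgeSet {s(a,b)}).edgeSet = insert s(a,b) H.edgeSet := by
  rw [edgeSet_sup, edgeSet_fromEdgeSet]
  have : ({s(a,b)} : Set (Sym2 V)) \ {e | e.IsDiag} = {s(a,b)} := by
    ext e
    simp only [Set.mem_diff, Set.mem_singleton_iff, Set.mem_setOf_eq, and_iff_left_iff_imp]
    rintro rfl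
    simpa [Sym2.mk_isDiag_iff] using hab
  rw [Sym2.diagSet_eq_setOf_isDiag, this, Set.union_singleton]

lemma enum_sup_single {H : SimpleGraph V} {a b : V} (hab : a ≠ b)
    (hne : s(a,b) ∉ H.edgeSet) :
    enum (H ⊔ fromEdgeSet {s(a,b)}) = enum H + 1 := by
  unfold enum
  rw [edgeSet_sup_single hab, Set.ncard_insert_of_notMem hne (Set.toFinite _)]

lemma sig_le_sup_single {H : SimpleGraph V} {a b : V} (hab : a ≠ b) :
    sig H ≤ sig (H ⊔ fromEdgeSet {s(a,b)}) := by
  by_cases he : s(a,b) ∈ H.edgeSet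
  · have heq : H ⊔ fromEdgeSet {s(a,b)} = H := by
      rw [sup_eq_left]
      intro x y hxy
      rw [fromEdgeSet_adj, Set.mem_singleton_iff] at hxy
      rw [← mem_edgeSet, hxy.1]
      exact he
    rw [heq]
  · have h1 := enum_sup_single hab he
    have h2 := cnum_le_add_one (H := H) (a := a) (b := b)
    unfold sig
    omega

lemma sig_mono_aux : ∀ (m : ℕ) (H K : SimpleGraph V), H ≤ K →
    (K.edgeSet \ H.edgeSet).ncard ≤ m → sig H ≤ sig K := by
  intro m
  induction m with
  | zero =>
    intro H K hle hcard
    have h0 : (K.edgeSet \ H.edgeSet) = ∅ := by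
      rw [← Set.ncard_eq_zero (Set.toFinite _)]
      omega
    have : K.edgeSet ⊆ H.edgeSet := by
      intro e he
      by_contra hne
      exact absurd h0 (Set.nonempty_iff_ne_empty.mp ⟨e, he, hne⟩)
    have : H = K := edgeSet_injective (le_antisymm (edgeSet_mono hle) this)
    rw [this]
  | succ m ih =>
    intro H K hle hcard
    by_cases hEq : K.edgeSet \ H.edgeSet = ∅
    · have : K.edgeSet ⊆ H.edgeSet := by
        intro e he
        by_contra hne
        exact absurd hEq (Set.nonempty_iff_ne_empty.mp ⟨e, he, hne⟩)
      have : H = K := edgeSet_injective (le_antisymm (edgeSet_mono hle) this)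
      rw [this]
    · obtain ⟨e, he⟩ := Set.nonempty_iff_ne_empty.mpr hEq
      induction e using Sym2.ind with
      | _ a b =>
      have hKadj : K.Adj a b := K.mem_edgeSet.mp he.1
      have hab : a ≠ b := hKadj.ne
      set H' := H ⊔ fromEdgeSet {s(a,b)} with hH'
      have hH'K : H' ≤ K := by
        refine sup_le hle ?_
        intro x y hxy
        rw [fromEdgeSet_adj, Set.mem_singleton_iff] at hxy
        rw [← mem_edgeSet, hxy.1]
        exact he.1
      have hstep : sig H ≤ sig H' := sig_le_sup_single hab
      have hsets : K.edgeSet \ H'.edgeSet = (K.edgeSet \ H.edgeSet) \ {s(a,b)} := by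
        rw [hH', edgeSet_sup_single hab]
        ext x
        simp only [Set.mem_diff, Set.mem_insert_iff, Set.mem_singleton_iff]
        tauto
      have hdiff : (K.edgeSet \ H'.edgeSet).ncard ≤ m := by
        rw [hsets]
        have := Set.ncard_diff_singleton_lt_of_mem he (Set.toFinite _)
        have h2 : ((K.edgeSet \ H.edgeSet) \ {s(a,b)}).ncard
            = (K.edgeSet \ H.edgeSet).ncard - 1 := by
          rw [← Set.ncard_diff_singleton_add_one he (Set.toFinite _)]
          simp
        omega
      exact hstep.trans (ih H' K hH'K hdiff)

lemma sig_mono {H K : SimpleGraph V} (hle : H ≤ K) : sig H ≤ sig K :=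
  sig_mono_aux _ H K hle le_rfl


lemma exists_edge_of_cycle {G : SimpleGraph V} {w v : V} (C : G.Walk w w) (hC : C.IsCycle)
    (hv : v ∈ C.support) : ∃ x, G.Adj v x ∧ s(v, x) ∈ C.edges := by
  classical
  have hrot := C.rotate_edges _ hv
  have hcyc' := hC.rotate hv
  cases h : C.rotate _ hv with
  | nil =>
    rw [h] at hcyc'
    exact absurd rfl hcyc'.ne_nil
  | cons ha q =>
    refine ⟨_, ha, hrot.mem_iff.mp ?_⟩
    rw [h]
    simp

lemma ncard_mem_list_le {α : Type*} (l : List α) : {y | y ∈ l}.ncard ≤ l.length := by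
  classical
  have h : {y | y ∈ l} = ↑l.toFinset := by ext y; simp
  rw [h, Set.ncard_coe_finset]
  exact l.toFinset_card_le

lemma ncard_support_le {G : SimpleGraph V} {w : V} (C : G.Walk w w) (hC : C.IsCycle) :
    {y | y ∈ C.support}.ncard ≤ C.length := by
  cases C with
  | nil => exact absurd rfl hC.ne_nil
  | cons ha q =>
    have hset : {y | y ∈ (Walk.cons ha q).support} = {y | y ∈ q.support} := by
      ext y
      simp only [Walk.support_cons, List.mem_cons, Set.mem_setOf_eq]
      constructor
      · rintro (rfl | h)
        · exact q.end_mem_support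
        · exact h
      · exact Or.inr
    rw [hset]
    calc {y | y ∈ q.support}.ncard ≤ q.support.length := ncard_mem_list_le _
      _ = q.length + 1 := q.length_support
      _ = (Walk.cons ha q).length := (Walk.length_cons _ _).symm

lemma sig_bump {G H : SimpleGraph V} (hle : H ≤ G) {w : V}
    (C : G.Walk w w) (hC : C.IsCycle) {a b : V} (hf : s(a,b) ∈ C.edges)
    (hfH : s(a,b) ∉ H.edgeSet) :
    sig H + 1 ≤ sig (H ⊔ fromEdgeSet {e | e ∈ C.edges}) := by
  classical
  set K := H ⊔ fromEdgeSet {e | e ∈ C.edges} with hKdef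
  set M := H ⊔ fromEdgeSet ({e | e ∈ C.edges} \ {s(a,b)}) with hMdef
  have hMK : K = M ⊔ fromEdgeSet {s(a,b)} := by
    ext x y
    simp only [hKdef, hMdef, sup_adj, fromEdgeSet_adj, Set.mem_diff, Set.mem_singleton_iff,
      Set.mem_setOf_eq]
    constructor
    · rintro (h | ⟨hm, hxy⟩)
      · exact Or.inl (Or.inl h)
      · by_cases hx : s(x,y) = s(a,b)
        · exact Or.inr ⟨hx, hxy⟩
        · exact Or.inl (Or.inr ⟨⟨hm, hx⟩, hxy⟩)
    · rintro ((h | ⟨⟨hm, _⟩, hxy⟩) | ⟨hx, hxy⟩)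
      · exact Or.inl h
      · exact Or.inr ⟨hm, hxy⟩
      · exact Or.inr ⟨hx ▸ hf, hxy⟩
  have hKedges : ∀ e ∈ C.edges, e ∈ K.edgeSet := by
    intro e he
    rw [hKdef, edgeSet_sup, edgeSet_fromEdgeSet]
    exact Or.inr ⟨he, G.not_isDiag_of_mem_edgeSet (C.edges_subset_edgeSet he)⟩
  have hbridge := (adj_and_reachable_delete_edges_iff_exists_cycle (G := K)
    (v := a) (w := b)).mpr ⟨w, C.transfer K hKedges, hC.transfer hKedges,
      by rwa [Walk.edges_transfer]⟩
  obtain ⟨hadjK, hreach⟩ := hbridge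
  have hab : a ≠ b := hadjK.ne
  have hsub : K \ fromEdgeSet {s(a,b)} ≤ M := by
    intro x y hxy
    obtain ⟨hK', hnf⟩ := hxy
    have hxyne : x ≠ y := hK'.ne
    have hxf : s(x,y) ≠ s(a,b) := by
      intro h
      exact hnf ((fromEdgeSet_adj _).mpr ⟨by rw [h]; rfl, hxyne⟩)
    rcases (sup_adj _ _ _ _).mp hK' with h | h
    · exact Or.inl h
    · rw [fromEdgeSet_adj] at h
      exact Or.inr ((fromEdgeSet_adj _).mpr ⟨⟨h.1, hxf⟩, hxyne⟩)
  have hreachM : M.Reachable a b := hreach.mono hsub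
  have hcnum : cnum M ≤ cnum K := by
    rw [hMK]
    exact cnum_le_of_reach hreachM
  have hfM : s(a,b) ∉ M.edgeSet := by
    rw [hMdef, edgeSet_sup, edgeSet_fromEdgeSet]
    rintro (h | ⟨⟨_, h2⟩, _⟩)
    · exact hfH h
    · exact h2 rfl
  have henum : enum K = enum M + 1 := by
    rw [hMK]
    exact enum_sup_single hab hfM
  have hsigHM : sig H ≤ sig M := sig_mono le_sup_left
  unfold sig at *
  omega

lemma build {G : SimpleGraph V} {k : ℕ}
    (hcyc : ∀ w : V, ∃ (v : V) (c : G.Walk v v),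
      c.IsCycle ∧ c.length ≤ k + 1 ∧ w ∈ c.support) :
    ∀ (m : ℕ) (H : SimpleGraph V), H ≤ G →
    (k+2) * Fintype.card V ≤ (k+1) * sig H + (H.supportᶜ : Set V).ncard →
    (H.supportᶜ : Set V).ncard ≤ m →
    ∃ F : SimpleGraph V, F ≤ G ∧ (k+2) * Fintype.card V ≤ (k+1) * sig F := by
  intro m
  induction m with
  | zero =>
    intro H hle hinv hm
    exact ⟨H, hle, by omega⟩
  | succ m ih =>
    intro H hle hinv hm
    by_cases h0 : (H.supportᶜ : Set V).ncard = 0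
    · exact ⟨H, hle, by omega⟩
    · have hne : (H.supportᶜ : Set V).Nonempty := by
        rw [Set.nonempty_iff_ne_empty]
        intro h
        rw [h] at h0
        simp at h0
      obtain ⟨v, hv⟩ := hne
      obtain ⟨w, C, hC, hlen, hvC⟩ := hcyc v
      set K := H ⊔ fromEdgeSet {e | e ∈ C.edges} with hKdef
      have hKG : K ≤ G := by
        refine sup_le hle ?_
        intro x y hxy
        rw [fromEdgeSet_adj] at hxy
        exact C.adj_of_mem_edges hxy.1
      obtain ⟨x, hvx, hfC⟩ := exists_edge_of_cycle C hC hvC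
      have hfH : s(v,x) ∉ H.edgeSet := by
        intro h
        exact hv ((H.mem_support).mpr ⟨x, (H.mem_edgeSet).mp h⟩)
      have hbump : sig H + 1 ≤ sig K := sig_bump hle C hC hfC hfH
      have hvK : v ∈ K.support :=
        (K.mem_support).mpr ⟨x, (sup_adj _ _ _ _).mpr
          (Or.inr ((fromEdgeSet_adj _).mpr ⟨hfC, hvx.ne⟩))⟩
      have hsub : (K.supportᶜ : Set V) ⊆ H.supportᶜ :=
        Set.compl_subset_compl.mpr (support_mono le_sup_left)
      have hnew : (H.supportᶜ : Set V) \ K.supportᶜ ⊆ {y | y ∈ C.support} := by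
        rintro y ⟨hy1, hy2⟩
        rw [Set.mem_compl_iff] at hy1 hy2
        obtain ⟨z, hz⟩ := (K.mem_support).mp (not_not.mp hy2)
        rcases (sup_adj _ _ _ _).mp hz with hz' | hz'
        · exact absurd ((H.mem_support).mpr ⟨z, hz'⟩) hy1
        · rw [fromEdgeSet_adj] at hz'
          exact C.fst_mem_support_of_mem_edges hz'.1
      have hcount : (H.supportᶜ : Set V).ncard ≤ (K.supportᶜ : Set V).ncard + (k+1) := by
        have h1 := Set.ncard_diff_add_ncard_of_subset hsub (Set.toFinite _)
        have h2 : ((H.supportᶜ : Set V) \ K.supportᶜ).ncard ≤ k + 1 := by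
          calc ((H.supportᶜ : Set V) \ K.supportᶜ).ncard
              ≤ {y | y ∈ C.support}.ncard := Set.ncard_le_ncard hnew (Set.toFinite _)
            _ ≤ C.length := ncard_support_le C hC
            _ ≤ k + 1 := hlen
        omega
      have hinvK : (k+2) * Fintype.card V ≤ (k+1) * sig K + (K.supportᶜ : Set V).ncard := by
        calc (k+2) * Fintype.card V ≤ (k+1) * sig H + (H.supportᶜ : Set V).ncard := hinv
          _ ≤ (k+1) * sig H + ((K.supportᶜ : Set V).ncard + (k+1)) := by omega
          _ = (k+1) * (sig H + 1) + (K.supportᶜ : Set V).ncard := by ring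
          _ ≤ (k+1) * sig K + (K.supportᶜ : Set V).ncard := by
              have := Nat.mul_le_mul_left (k+1) hbump
              omega
      have hmK : (K.supportᶜ : Set V).ncard ≤ m := by
        have hss : (K.supportᶜ : Set V) ⊂ H.supportᶜ :=
          ⟨hsub, fun hsub2 => (hsub2 hv : v ∈ (K.supportᶜ : Set V)) hvK⟩
        have := Set.ncard_lt_ncard hss (Set.toFinite _)
        omega
      exact ih K hKG hinvK hmK

end Stmt13Aux

theorem stmt_13 {V : Type*} [Fintype V] (G : SimpleGraph V)
    (n k : ℕ) (hn : Fintype.card V = n)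
    (hconn : G.Connected)
    (hcyc : ∀ w : V, ∃ (v : V) (c : G.Walk v v),
      c.IsCycle ∧ c.length ≤ k + 1 ∧ w ∈ c.support) :
    ((n : ℝ) - 1) * ((k : ℝ) + 2) / ((k : ℝ) + 1) ≤ (G.edgeSet.ncard : ℝ) := by
  classical
  subst hn
  have hbot_e : Stmt13Aux.enum (⊥ : SimpleGraph V) = 0 := by
    unfold Stmt13Aux.enum
    rw [edgeSet_bot]
    simp
  have hbot_c : Fintype.card V ≤ Stmt13Aux.cnum (⊥ : SimpleGraph V) := by
    rw [← Nat.card_eq_fintype_card]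
    refine Nat.card_le_card_of_injective (SimpleGraph.connectedComponentMk ⊥) ?_
    intro x y hxy
    obtain ⟨p⟩ := ConnectedComponent.exact hxy
    cases p with
    | nil => rfl
    | cons h _ => exact absurd h (by simp)
  have hbot_supp : (((⊥ : SimpleGraph V).supportᶜ) : Set V).ncard = Fintype.card V := by
    have h : (⊥ : SimpleGraph V).support = ∅ := by
      ext y
      simp [SimpleGraph.mem_support]
    rw [h, Set.compl_empty, Set.ncard_univ, Nat.card_eq_fintype_card]
  obtain ⟨F, hFG, hF⟩ := Stmt13Aux.build hcyc
      ((((⊥ : SimpleGraph V).supportᶜ) : Set V).ncard) ⊥ bot_le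
      (by
        rw [hbot_supp]
        have h1 : (k+1) * Fintype.card V ≤ (k+1) * Stmt13Aux.sig (⊥ : SimpleGraph V) := by
          apply Nat.mul_le_mul_left
          unfold Stmt13Aux.sig
          omega
        have : (k+2) * Fintype.card V = (k+1) * Fintype.card V + Fintype.card V := by ring
        omega)
      le_rfl
  have hFs : Stmt13Aux.sig F ≤ Stmt13Aux.sig G := Stmt13Aux.sig_mono hFG
  have hcG : Stmt13Aux.cnum G = 1 := by
    rw [Stmt13Aux.cnum, Nat.card_eq_one_iff_unique]
    constructor
    · exact ⟨ConnectedComponent.ind₂ fun a b =>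
        ConnectedComponent.sound (hconn.preconnected a b)⟩
    · exact ⟨G.connectedComponentMk hconn.nonempty.some⟩
  have hmain : (k+2) * Fintype.card V ≤ (k+1) * (G.edgeSet.ncard + 1) := by
    calc (k+2) * Fintype.card V ≤ (k+1) * Stmt13Aux.sig F := hF
      _ ≤ (k+1) * Stmt13Aux.sig G := Nat.mul_le_mul_left _ hFs
      _ = (k+1) * (G.edgeSet.ncard + 1) := by
          unfold Stmt13Aux.sig Stmt13Aux.enum
          rw [hcG]
  rw [div_le_iff₀ (by positivity : (0:ℝ) < (k:ℝ) + 1)]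
  have hcast : ((k:ℝ)+2) * (Fintype.card V : ℝ) ≤ ((k:ℝ)+1) * ((G.edgeSet.ncard : ℝ) + 1) := by
    exact_mod_cast hmain
  nlinarith [hcast]
end

section
/- The graph H_{k,n} defined in the paper contains no cycle of length k, for n > k ≥ 7. -/
set_option maxHeartbeats 2000000


open SimpleGraph

/-- Vertex set of the graph `H_{k,n}`: `A ⊕ B` (two vertices each) plus
`C ⊕ D` (`k-5` and `r` vertices) plus `R₁ ∪ ⋯ ∪ R_t` (`t` sets of `k-4` vertices). -/
abbrev HVtx (k r t : ℕ) : Type :=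
  (Fin 2 ⊕ Fin 2) ⊕ ((Fin (k - 5) ⊕ Fin r) ⊕ (Fin t × Fin (k - 4)))

/-- The vertices `a₁, a₂`. -/
def aVtx (k r t : ℕ) (i : Fin 2) : HVtx k r t := Sum.inl (Sum.inl i)

/-- Underlying (asymmetric) relation of `H_{k,n}`:
a complete graph on `B ∪ C` minus the edge `b₁b₂`, a `K₄` minus the edge `b₁b₂`
on `A ∪ B`, pendant edges `cᵢdᵢ`, and for each `α` a path
`a₁ r_{α,1} r_{α,2} ⋯ r_{α,k-4} a₂` of length `k-3`. -/
def HRel (k r t : ℕ) : HVtx k r t → HVtx k r t → Prop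
  | .inl (.inl i), .inl (.inl j) => i ≠ j                       -- the edge a₁a₂
  | .inl (.inl _), .inl (.inr _) => True                        -- all A–B edges
  | .inl (.inr _), .inr (.inl (.inl _)) => True                 -- all B–C edges
  | .inr (.inl (.inl i)), .inr (.inl (.inl j)) => i ≠ j         -- C is complete
  | .inr (.inl (.inl i)), .inr (.inl (.inr j)) => (i : ℕ) = (j : ℕ)  -- pendant cᵢdᵢ
  | .inl (.inl i), .inr (.inr (_, j)) =>
      ((i : ℕ) = 0 ∧ (j : ℕ) = 0) ∨ ((i : ℕ) = 1 ∧ (j : ℕ) = k - 5)  -- path ends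
  | .inr (.inr (α, i)), .inr (.inr (β, j)) => α = β ∧ (j : ℕ) = (i : ℕ) + 1 -- path edges
  | _, _ => False

/-- The `C_k`-saturated graph `H_{k,n}` of the paper, where
`n = (k-1) + r + t(k-4)`. -/
def Hgraph (k r t : ℕ) : SimpleGraph (HVtx k r t) :=
  SimpleGraph.fromRel (HRel k r t)


lemma path_start_unique {V : Type*} {G : SimpleGraph V} {u v : V} {q : G.Walk u v}
    (hq : q.IsPath) {x y : V} (hx : s(u, x) ∈ q.edges) (hy : s(u, y) ∈ q.edges) : x = y := by
  cases q with
  | nil => simp at hx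
  | @cons _ w _ h q' =>
    have hnd := hq.support_nodup
    rw [SimpleGraph.Walk.support_cons] at hnd
    have hus : u ∉ q'.support := (List.nodup_cons.mp hnd).1
    have key : ∀ z, s(u, z) ∈ (SimpleGraph.Walk.cons h q').edges → z = w := by
      intro z hz
      rw [SimpleGraph.Walk.edges_cons, List.mem_cons] at hz
      rcases hz with hz | hz
      · rw [Sym2.eq, Sym2.rel_iff'] at hz
        rcases hz with hz | hz
        · exact (Prod.mk.injEq .. ▸ hz).2
        · exact absurd (Prod.mk.injEq .. ▸ hz).1 h.ne
      · exact absurd (q'.fst_mem_support_of_mem_edges hz) hus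
    rw [key x hx, key y hy]

lemma cycle_nbrs {V : Type*} [DecidableEq V] {G : SimpleGraph V} {v : V} {c : G.Walk v v} (hc : c.IsCycle)
    {u : V} (hu : u ∈ c.support) :
    ∃ w p : V, w ≠ p ∧ s(u, w) ∈ c.edges ∧ s(u, p) ∈ c.edges ∧
      ∀ x, s(u, x) ∈ c.edges → x = w ∨ x = p := by
  have hmem : ∀ e, e ∈ (c.rotate _ hu).edges ↔ e ∈ c.edges :=
    fun e => (c.rotate_edges _ hu).perm.mem_iff
  have hc' : (c.rotate _ hu).IsCycle := (SimpleGraph.Walk.isCycle_rotate hu).mpr hc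
  have hlen : 3 ≤ (c.rotate _ hu).length := hc'.three_le_length
  set c' := c.rotate _ hu with hc'def
  clear_value c'
  cases c' with
  | nil => exact absurd hc' (SimpleGraph.Walk.IsCycle.not_of_nil)
  | @cons _ w _ h q =>
    rw [SimpleGraph.Walk.cons_isCycle_iff] at hc'
    obtain ⟨hq, hne⟩ := hc'
    have hqnil : ¬ q.reverse.Nil := by
      rw [SimpleGraph.Walk.not_nil_iff_lt_length, SimpleGraph.Walk.length_reverse]
      have := SimpleGraph.Walk.length_cons h q ▸ hlen
      omega
    obtain ⟨p, h', q'', hq''⟩ := SimpleGraph.Walk.not_nil_iff.mp hqnil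
    have hrevpath : q.reverse.IsPath := q.isPath_reverse_iff.mpr hq
    have hpe : s(u, p) ∈ q.reverse.edges := by rw [hq'']; simp
    have hpe' : s(u, p) ∈ q.edges := by
      rwa [SimpleGraph.Walk.edges_reverse, List.mem_reverse] at hpe
    refine ⟨w, p, ?_, ?_, ?_, ?_⟩
    · rintro rfl; exact hne hpe'
    · rw [← hmem]; simp
    · rw [← hmem]; simp [hpe']
    · intro x hx
      rw [← hmem, SimpleGraph.Walk.edges_cons, List.mem_cons] at hx
      rcases hx with hx | hx
      · left
        rw [Sym2.eq, Sym2.rel_iff'] at hx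
        rcases hx with hx | hx
        · exact (Prod.mk.injEq .. ▸ hx).2
        · exact absurd (Prod.mk.injEq .. ▸ hx).1 h.ne
      · right
        have hx' : s(u, x) ∈ q.reverse.edges := by
          rwa [SimpleGraph.Walk.edges_reverse, List.mem_reverse]
        exact path_start_unique hrevpath hx' hpe

lemma cycle_support_card {V : Type*} [DecidableEq V] {G : SimpleGraph V} {v : V}
    {c : G.Walk v v} (hc : c.IsCycle) : c.support.toFinset.card = c.length := by
  have hnd : c.support.tail.Nodup := hc.2
  have hlen : c.support.tail.length = c.length := by
    rw [List.length_tail, c.length_support]; omega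
  have hvmem : v ∈ c.support.tail := by
    cases c with
    | nil => exact absurd hc SimpleGraph.Walk.IsCycle.not_of_nil
    | cons h q => simp
  rw [c.support_eq_cons, List.toFinset_cons,
    Finset.insert_eq_self.mpr (List.mem_toFinset.mpr hvmem),
    List.toFinset_card_of_nodup hnd]
  exact hlen

lemma other_nbr {V : Type*} [DecidableEq V] {G : SimpleGraph V} {v : V} {c : G.Walk v v}
    (hc : c.IsCycle) {u y : V} (hu : u ∈ c.support) (hy : s(u, y) ∈ c.edges) :
    ∃ z, z ≠ y ∧ s(u, z) ∈ c.edges ∧ ∀ x, s(u, x) ∈ c.edges → x = y ∨ x = z := by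
  obtain ⟨w, p, hwp, hw, hp, hun⟩ := cycle_nbrs hc hu
  rcases hun y hy with rfl | rfl
  · exact ⟨p, fun h => hwp h.symm, hp, fun x hx => hun x hx⟩
  · exact ⟨w, fun h => hwp h, hw, fun x hx => (hun x hx).symm⟩

lemma walk_closed {V : Type*} {G : SimpleGraph V} {a b : V} (p : G.Walk a b) (F : V → Prop)
    (ha : F a) (hcl : ∀ u, F u → ∀ x, s(u, x) ∈ p.edges → F x) : ∀ u ∈ p.support, F u := by
  induction p with
  | nil => intro u hu; rw [SimpleGraph.Walk.mem_support_nil_iff] at hu; rwa [hu]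
  | @cons a' w b' h q ih =>
    intro u hu
    have hw : F w := hcl a' ha w (by simp)
    rw [SimpleGraph.Walk.support_cons, List.mem_cons] at hu
    rcases hu with rfl | hu
    · exact ha
    · exact ih hw (fun u' hu' x hx => hcl u' hu' x (by simp [hx])) u hu

lemma closed_end_mem_tail {V : Type*} {G : SimpleGraph V} {v : V} {c : G.Walk v v}
    (h3 : 0 < c.length) : v ∈ c.support.tail := by
  cases c with
  | nil => simp at h3
  | cons h q => simp

lemma rotate_support_mem {V : Type*} [DecidableEq V] {G : SimpleGraph V} {v u : V}
    {c : G.Walk v v} (hc : c.IsCycle) (h : u ∈ c.support) {x : V} :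
    x ∈ (c.rotate _ h).support ↔ x ∈ c.support := by
  have hlen : 0 < c.length := by have := hc.three_le_length; omega
  have hlen' : 0 < (c.rotate _ h).length := by
    have h1 := (c.rotate_edges _ h).perm.length_eq
    rw [SimpleGraph.Walk.length_edges, SimpleGraph.Walk.length_edges] at h1
    omega
  have hvt : v ∈ c.support.tail := closed_end_mem_tail hlen
  have hut : u ∈ (c.rotate _ h).support.tail := closed_end_mem_tail hlen'
  have hrot := (c.support_rotate _ h).mem_iff (a := x)
  constructor
  · intro hx
    rw [(c.rotate _ h).support_eq_cons, List.mem_cons] at hx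
    rw [c.support_eq_cons, List.mem_cons]
    rcases hx with rfl | hx
    · right; rw [← hrot]; exact hut
    · right; rw [← hrot]; exact hx
  · intro hx
    rw [c.support_eq_cons, List.mem_cons] at hx
    rw [(c.rotate _ h).support_eq_cons, List.mem_cons]
    rcases hx with rfl | hx
    · right; rw [hrot]; exact hvt
    · right; rw [hrot]; exact hx

section aux
variable {k r t : ℕ}

def va (i : Fin 2) : HVtx k r t := Sum.inl (Sum.inl i)
def vb (i : Fin 2) : HVtx k r t := Sum.inl (Sum.inr i)
def vc (i : Fin (k-5)) : HVtx k r t := Sum.inr (Sum.inl (Sum.inl i))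
def vd (i : Fin r) : HVtx k r t := Sum.inr (Sum.inl (Sum.inr i))
def vr (α : Fin t) (i : Fin (k-4)) : HVtx k r t := Sum.inr (Sum.inr (α, i))

lemma adj_vd {j : Fin r} {x : HVtx k r t} (h : (Hgraph k r t).Adj (vd j) x) :
    ∃ i : Fin (k-5), (i : ℕ) = (j : ℕ) ∧ x = vc i := by
  rw [Hgraph, fromRel_adj] at h
  obtain ⟨hne, h | h⟩ := h <;>
    rcases x with ((i|i)|((i|i)|⟨β,i⟩)) <;>
    simp_all [HRel, vd, vc]

lemma adj_vb {m : Fin 2} {x : HVtx k r t} (h : (Hgraph k r t).Adj (vb m) x) :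
    x = va 0 ∨ x = va 1 ∨ ∃ i : Fin (k-5), x = vc i := by
  rw [Hgraph, fromRel_adj] at h
  obtain ⟨hne, h | h⟩ := h <;>
    rcases x with ((i|i)|((i|i)|⟨β,i⟩)) <;>
    simp_all [HRel, va, vb, vc] <;> omega

lemma adj_vc {i : Fin (k-5)} {x : HVtx k r t} (h : (Hgraph k r t).Adj (vc i) x) :
    x = vb 0 ∨ x = vb 1 ∨ (∃ i' : Fin (k-5), x = vc i') ∨ (∃ j : Fin r, x = vd j) := by
  rw [Hgraph, fromRel_adj] at h
  obtain ⟨hne, h | h⟩ := h <;>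
    rcases x with ((i'|i')|((i'|i')|⟨β,i'⟩)) <;>
    simp_all [HRel, vb, vc, vd] <;> omega

lemma adj_va0 {x : HVtx k r t} (h : (Hgraph k r t).Adj (va 0) x) :
    x = va 1 ∨ x = vb 0 ∨ x = vb 1 ∨ ∃ (β : Fin t) (i : Fin (k-4)), (i : ℕ) = 0 ∧ x = vr β i := by
  rw [Hgraph, fromRel_adj] at h
  obtain ⟨hne, h | h⟩ := h <;>
    rcases x with ((i|i)|((i|i)|⟨β,i⟩)) <;>
    simp_all [HRel, va, vb, vr] <;> omega

lemma adj_va1 {x : HVtx k r t} (h : (Hgraph k r t).Adj (va 1) x) :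
    x = va 0 ∨ x = vb 0 ∨ x = vb 1 ∨ ∃ (β : Fin t) (i : Fin (k-4)), (i : ℕ) = k-5 ∧ x = vr β i := by
  rw [Hgraph, fromRel_adj] at h
  obtain ⟨hne, h | h⟩ := h <;>
    rcases x with ((i|i)|((i|i)|⟨β,i⟩)) <;>
    simp_all [HRel, va, vb, vr] <;> omega

lemma adj_vr {α : Fin t} {j : Fin (k-4)} {x : HVtx k r t} (h : (Hgraph k r t).Adj (vr α j) x) :
    (∃ m : Fin 2, ((m : ℕ) = 0 ∧ (j : ℕ) = 0 ∨ (m : ℕ) = 1 ∧ (j : ℕ) = k - 5) ∧ x = va m) ∨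
    (∃ i : Fin (k-4), ((i : ℕ) = (j : ℕ) + 1 ∨ ((j : ℕ) = (i : ℕ) + 1)) ∧ x = vr α i) := by
  rw [Hgraph, fromRel_adj] at h
  obtain ⟨hne, h | h⟩ := h <;>
    rcases x with ((i|i)|((i|i)|⟨β,i⟩)) <;>
    simp_all [HRel, va, vr]

end aux

theorem stmt_15 (k r t : ℕ) (hk : 7 ≤ k) (ht : 1 ≤ t) (hr : r ≤ k - 5) :
    ¬ hasCycleLength (Hgraph k r t) k := by
  rintro ⟨v, c, hc, hlen⟩
  classical
  have hedge_adj : ∀ {x y : HVtx k r t}, s(x, y) ∈ c.edges → (Hgraph k r t).Adj x y :=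
    fun h => ((Hgraph k r t).mem_edgeSet).mp (c.edges_subset_edgeSet h)
  have hScard : c.support.toFinset.card = k := by rw [cycle_support_card hc, hlen]
  -- no D vertex is on the cycle
  have hD : ∀ j : Fin r, vd j ∉ c.support := by
    intro j hj
    obtain ⟨w, p, hwp, hw, hp, -⟩ := cycle_nbrs hc hj
    obtain ⟨i₁, hi₁, rfl⟩ := adj_vd (hedge_adj hw)
    obtain ⟨i₂, hi₂, rfl⟩ := adj_vd (hedge_adj hp)
    exact hwp (by rw [vc, vc]; congr 1; congr 1; congr 1; exact Fin.ext (by omega))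
  rcases Classical.em (∃ (β : Fin t) (i₀ : Fin (k-4)), vr β i₀ ∈ c.support) with hR | hR
  · -- case 2 : the cycle meets some R_β
    obtain ⟨α, i₀, h₀⟩ := hR
    have hstep : ∀ (β : Fin t) (j : Fin (k-4)), vr β j ∈ c.support →
        ∃ P N : HVtx k r t, P ≠ N ∧ s(vr β j, P) ∈ c.edges ∧ s(vr β j, N) ∈ c.edges ∧
          (∀ x, s(vr β j, x) ∈ c.edges → x = P ∨ x = N) ∧
          ((j : ℕ) = 0 → P = va 0) ∧
          (∀ _h : (j : ℕ) ≠ 0, P = vr β ⟨(j : ℕ) - 1, by have := j.isLt; omega⟩) ∧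
          ((j : ℕ) = k - 5 → N = va 1) ∧
          (∀ _h : (j : ℕ) ≠ k - 5, N = vr β ⟨(j : ℕ) + 1, by have := j.isLt; omega⟩) := by
      intro β j hj
      obtain ⟨w, p, hwp, hw, hp, hun⟩ := cycle_nbrs hc hj
      obtain ⟨P, hPdef⟩ : ∃ P : HVtx k r t,
          P = if h0 : (j : ℕ) = 0 then va 0 else vr β ⟨(j : ℕ) - 1, by have := j.isLt; omega⟩ :=
        ⟨_, rfl⟩
      obtain ⟨N, hNdef⟩ : ∃ N : HVtx k r t,
          N = if hl : (j : ℕ) = k - 5 then va 1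
            else vr β ⟨(j : ℕ) + 1, by have := j.isLt; omega⟩ :=
        ⟨_, rfl⟩
      have hPN : P ≠ N := by
        rw [hPdef, hNdef]
        have hjk := j.isLt
        split_ifs with h0 hl hl <;> simp [va, vr] <;> omega
      have hxPN : ∀ x, s(vr β j, x) ∈ c.edges → x = P ∨ x = N := by
        intro x hx
        rcases adj_vr (hedge_adj hx) with ⟨m, hm, rfl⟩ | ⟨i, hi, rfl⟩
        · rcases hm with ⟨hm0, hj0⟩ | ⟨hm1, hjl⟩
          · left
            have : m = 0 := Fin.ext (by simpa using hm0)
            rw [this, hPdef, dif_pos hj0]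
          · right
            have : m = 1 := Fin.ext (by simpa using hm1)
            rw [this, hNdef, dif_pos hjl]
        · rcases hi with h1 | h2
          · right
            have hjl : (j : ℕ) ≠ k - 5 := by have := i.isLt; omega
            refine Eq.trans ?_ (hNdef.trans (dif_neg hjl)).symm
            exact congrArg (vr β) (Fin.ext h1)
          · left
            have hj0 : (j : ℕ) ≠ 0 := by omega
            refine Eq.trans ?_ (hPdef.trans (dif_neg hj0)).symm
            exact congrArg (vr β) (Fin.ext (show (i : ℕ) = (j : ℕ) - 1 by omega))
      have hPcond1 : (j : ℕ) = 0 → P = va 0 := fun h0 => by rw [hPdef, dif_pos h0]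
      have hPcond2 : ∀ _h : (j : ℕ) ≠ 0,
          P = vr β ⟨(j : ℕ) - 1, by have := j.isLt; omega⟩ :=
        fun h0 => hPdef.trans (dif_neg h0)
      have hNcond1 : (j : ℕ) = k - 5 → N = va 1 := fun hl => hNdef.trans (dif_pos hl)
      have hNcond2 : ∀ _h : (j : ℕ) ≠ k - 5,
          N = vr β ⟨(j : ℕ) + 1, by have := j.isLt; omega⟩ :=
        fun hl => hNdef.trans (dif_neg hl)
      rcases hxPN w hw with hw1 | hw1 <;> rcases hxPN p hp with hp1 | hp1
      · exact absurd (hw1.trans hp1.symm) hwp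
      · exact ⟨P, N, hPN, hw1 ▸ hw, hp1 ▸ hp, hxPN, hPcond1, hPcond2, hNcond1, hNcond2⟩
      · exact ⟨P, N, hPN, hp1 ▸ hp, hw1 ▸ hw, hxPN, hPcond1, hPcond2, hNcond1, hNcond2⟩
      · exact absurd (hw1.trans hp1.symm) hwp
    -- propagation along a path R_β
    have hall : ∀ (β : Fin t), (∃ i, vr β i ∈ c.support) →
        ∀ m (hm : m < k - 4), vr β ⟨m, hm⟩ ∈ c.support := by
      rintro β ⟨i1, hi1⟩
      have hdown : ∀ m, ∀ (hm : m < k - 4), vr β ⟨m, hm⟩ ∈ c.support →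
          vr β ⟨0, by omega⟩ ∈ c.support := by
        intro m
        induction m with
        | zero => intro hm h; exact h
        | succ n ih =>
          intro hm h
          obtain ⟨P, N, hPN, hPe, hNe, hun, hP0, hPn, hN1, hNn⟩ := hstep β ⟨n+1, hm⟩ h
          rw [hPn (by simp)] at hPe
          exact ih (by omega) (c.snd_mem_support_of_mem_edges hPe)
      have h0 : vr β ⟨0, by omega⟩ ∈ c.support := hdown i1.val i1.isLt hi1
      intro m
      induction m with
      | zero => intro hm; exact h0
      | succ n ih =>
        intro hm
        obtain ⟨P, N, hPN, hPe, hNe, hun, hP0, hPn, hN1, hNn⟩ :=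
          hstep β ⟨n, by omega⟩ (ih (by omega))
        rw [hNn (by simp; omega)] at hNe
        exact c.snd_mem_support_of_mem_edges hNe
    have hallα := hall α ⟨i₀, h₀⟩
    have h5 : k - 5 < k - 4 := by omega
    have hz : (0 : ℕ) < k - 4 := by omega
    -- the two end edges of the path R_α
    obtain ⟨P0, N0, hPN0, hPe0, hNe0, hun00, hP00, hPn0, hN10, hNn0⟩ :=
      hstep α ⟨0, hz⟩ (hallα 0 hz)
    rw [hP00 rfl] at hPe0
    have e₀ : s(va 0, vr α ⟨0, hz⟩) ∈ c.edges := by rwa [Sym2.eq_swap] at hPe0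
    have ha0 : va 0 ∈ c.support := c.fst_mem_support_of_mem_edges e₀
    obtain ⟨P1, N1, hPN1, hPe1, hNe1, hun11, hP01, hPn1, hN11, hNn1⟩ :=
      hstep α ⟨k-5, h5⟩ (hallα (k-5) h5)
    rw [hN11 rfl] at hNe1
    have e₁ : s(va 1, vr α ⟨k-5, h5⟩) ∈ c.edges := by rwa [Sym2.eq_swap] at hNe1
    have ha1 : va 1 ∈ c.support := c.fst_mem_support_of_mem_edges e₁
    -- basic cardinality facts
    have hinjvr : ∀ β : Fin t, Function.Injective (vr (k := k) (r := r) β) := by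
      intro β x y h
      simpa [vr] using h
    have himcard : ∀ β : Fin t, (Finset.univ.image (vr (k := k) (r := r) β)).card = k - 4 := by
      intro β
      rw [Finset.card_image_of_injective _ (hinjvr β), Finset.card_univ, Fintype.card_fin]
    -- a second R path cannot meet the cycle
    have htwoR : ∀ β : Fin t, β ≠ α → (∃ i, vr β i ∈ c.support) → False := by
      intro β hβ hmem
      have hallβ := hall β hmem
      set F2 : Finset (HVtx k r t) :=
        (Finset.univ.image (vr α) ∪ Finset.univ.image (vr β)) ∪ {va 0, va 1} with hF2
      have hsub : F2 ⊆ c.support.toFinset := by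
        intro x hx
        rw [hF2] at hx
        simp only [Finset.mem_union, Finset.mem_image, Finset.mem_univ, true_and,
          Finset.mem_insert, Finset.mem_singleton] at hx
        rw [List.mem_toFinset]
        rcases hx with (⟨i, rfl⟩ | ⟨i, rfl⟩) | (rfl | rfl)
        · exact hallα i.val i.isLt
        · exact hallβ i.val i.isLt
        · exact ha0
        · exact ha1
      have hd1 : Disjoint (Finset.univ.image (vr (k := k) (r := r) α))
          (Finset.univ.image (vr (k := k) (r := r) β)) := by
        rw [Finset.disjoint_left]
        rintro x hx hy
        simp only [Finset.mem_image, Finset.mem_univ, true_and] at hx hy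
        obtain ⟨i, rfl⟩ := hx
        obtain ⟨i', hi'⟩ := hy
        rw [vr, vr] at hi'
        simp at hi'
        exact hβ hi'.1
      have hd2 : Disjoint (Finset.univ.image (vr (k := k) (r := r) α) ∪
          Finset.univ.image (vr (k := k) (r := r) β)) ({va 0, va 1} : Finset (HVtx k r t)) := by
        rw [Finset.disjoint_right]
        intro x hx hy
        simp only [Finset.mem_insert, Finset.mem_singleton] at hx
        simp only [Finset.mem_union, Finset.mem_image, Finset.mem_univ, true_and] at hy
        rcases hy with ⟨i, hi⟩ | ⟨i, hi⟩ <;> rcases hx with rfl | rfl <;>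
          simp [va, vr] at hi
      have hc2 : F2.card = (k - 4) + (k - 4) + 2 := by
        have hpair : ({va 0, va 1} : Finset (HVtx k r t)).card = 2 :=
          Finset.card_pair (by simp [va])
        rw [hF2, Finset.card_union_of_disjoint hd2, Finset.card_union_of_disjoint hd1,
          himcard, himcard, hpair]
      have := Finset.card_le_card hsub
      rw [hc2, hScard] at this
      omega
    -- the second neighbours of a₁ and a₂
    obtain ⟨z₀, hz₀ne, hz₀e, hu0⟩ := other_nbr hc ha0 e₀
    obtain ⟨z₁, hz₁ne, hz₁e, hu1⟩ := other_nbr hc ha1 e₁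
    -- closure machinery
    have hclosure : ∀ F : Finset (HVtx k r t), va 0 ∈ F →
        (∀ u ∈ F, ∀ x, s(u, x) ∈ c.edges → x ∈ F) → c.support.toFinset ⊆ F := by
      intro F hvF hcl x hx
      refine walk_closed (c.rotate _ ha0) (· ∈ F) hvF (fun u hu y hy => hcl u hu y ?_) x ?_
      · rwa [(c.rotate_edges _ ha0).perm.mem_iff] at hy
      · exact (rotate_support_mem hc ha0).mpr (List.mem_toFinset.mp hx)
    have hvr_closed : ∀ (j : Fin (k-4)) (x : HVtx k r t), s(vr α j, x) ∈ c.edges →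
        x = va 0 ∨ x = va 1 ∨ ∃ i, x = vr α i := by
      intro j x hx
      have hjm : vr α j ∈ c.support := hallα j.val j.isLt
      obtain ⟨P, N, hPN, hPe, hNe, hun, hP0, hPn, hN1, hNn⟩ := hstep α j hjm
      rcases hun x hx with rfl | rfl
      · by_cases h0 : (j : ℕ) = 0
        · exact Or.inl (hP0 h0)
        · exact Or.inr (Or.inr ⟨_, hPn h0⟩)
      · by_cases hl : (j : ℕ) = k - 5
        · exact Or.inr (Or.inl (hN1 hl))
        · exact Or.inr (Or.inr ⟨_, hNn hl⟩)
    set Fb : Finset (HVtx k r t) := {va 0, va 1} ∪ Finset.univ.image (vr α) with hFb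
    have hFbcases : ∀ u : HVtx k r t, u ∈ Fb → u = va 0 ∨ u = va 1 ∨ ∃ i, u = vr α i := by
      intro u hu
      simp only [hFb, Finset.mem_union, Finset.mem_insert, Finset.mem_singleton,
        Finset.mem_image, Finset.mem_univ, true_and] at hu
      rcases hu with (rfl | rfl) | ⟨i, rfl⟩
      · exact Or.inl rfl
      · exact Or.inr (Or.inl rfl)
      · exact Or.inr (Or.inr ⟨i, rfl⟩)
    have hm0 : va 0 ∈ Fb := by simp [hFb]
    have hm1 : va 1 ∈ Fb := by simp [hFb]
    have hmr : ∀ i : Fin (k-4), vr α i ∈ Fb := by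
      intro i
      simp only [hFb, Finset.mem_union, Finset.mem_image, Finset.mem_univ, true_and]
      exact Or.inr ⟨i, rfl⟩
    have hFbcard : Fb.card = 2 + (k - 4) := by
      have hdisj : Disjoint ({va 0, va 1} : Finset (HVtx k r t))
          (Finset.univ.image (vr α)) := by
        rw [Finset.disjoint_left]
        intro x hx hy
        simp only [Finset.mem_insert, Finset.mem_singleton] at hx
        simp only [Finset.mem_image, Finset.mem_univ, true_and] at hy
        obtain ⟨i, hi⟩ := hy
        rcases hx with rfl | rfl <;> simp [va, vr] at hi
      rw [hFb, Finset.card_union_of_disjoint hdisj, Finset.card_pair (by simp [va]),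
        himcard α]
    have hbnotin : ∀ m : Fin 2, vb m ∉ Fb := by
      intro m hmem
      rcases hFbcases _ hmem with h | h | ⟨i', h⟩ <;> simp [va, vb, vr] at h
    -- main analysis of the second neighbour of a₁ when it is b₁ or b₂
    have hmain : ∀ m : Fin 2, z₀ = vb m → False := by
      intro m h0
      have hbm : vb m ∈ c.support := h0 ▸ c.snd_mem_support_of_mem_edges hz₀e
      have e₂ : s(vb m, va 0) ∈ c.edges := by
        rw [h0] at hz₀e; rwa [Sym2.eq_swap] at hz₀e
      obtain ⟨z₂, hz₂ne, hz₂e, hu2⟩ := other_nbr hc hbm e₂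
      rcases adj_vb (hedge_adj hz₂e) with h2 | h2 | ⟨i, h2⟩
      · exact hz₂ne h2
      · -- the second neighbour of b is a₂
        have hz1 : z₁ = vb m := by
          have he : s(va 1, vb m) ∈ c.edges := by
            rw [h2] at hz₂e; rwa [Sym2.eq_swap] at hz₂e
          rcases hu1 _ he with hbad | hgood
          · exfalso; simp [vb, vr] at hbad
          · exact hgood.symm
        have hmbm : vb m ∈ insert (vb m) Fb := Finset.mem_insert_self _ _
        have hcl : ∀ u ∈ insert (vb m) Fb, ∀ x, s(u, x) ∈ c.edges →
            x ∈ insert (vb m) Fb := by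
          intro u hu x hx
          rcases Finset.mem_insert.mp hu with rfl | hu'
          · rcases hu2 x hx with rfl | rfl
            · exact Finset.mem_insert_of_mem hm0
            · rw [h2]; exact Finset.mem_insert_of_mem hm1
          rcases hFbcases u hu' with rfl | rfl | ⟨i, rfl⟩
          · rcases hu0 x hx with rfl | rfl
            · exact Finset.mem_insert_of_mem (hmr _)
            · rw [h0]; exact hmbm
          · rcases hu1 x hx with rfl | rfl
            · exact Finset.mem_insert_of_mem (hmr _)
            · rw [hz1]; exact hmbm
          · rcases hvr_closed i x hx with rfl | rfl | ⟨i', rfl⟩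
            · exact Finset.mem_insert_of_mem hm0
            · exact Finset.mem_insert_of_mem hm1
            · exact Finset.mem_insert_of_mem (hmr _)
        have hcard := Finset.card_le_card
          (hclosure _ (Finset.mem_insert_of_mem hm0) hcl)
        rw [hScard, Finset.card_insert_of_notMem (hbnotin m), hFbcard] at hcard
        omega
      · -- the second neighbour of b is a C vertex
        have hvci : vc i ∈ c.support := h2 ▸ c.snd_mem_support_of_mem_edges hz₂e
        have e₃ : s(vc i, vb m) ∈ c.edges := by
          rw [h2] at hz₂e; rwa [Sym2.eq_swap] at hz₂e
        obtain ⟨z₃, hz₃ne, hz₃e, -⟩ := other_nbr hc hvci e₃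
        have hz₃mem : z₃ ∈ c.support := c.snd_mem_support_of_mem_edges hz₃e
        have hz₃nc : z₃ ≠ vc i := fun h => (hedge_adj hz₃e).ne h.symm
        have hz₃notin : z₃ ∉ insert (vc i) (insert (vb m) Fb) := by
          intro hmem
          rcases Finset.mem_insert.mp hmem with h | hmem
          · exact hz₃nc h
          rcases Finset.mem_insert.mp hmem with h | hmem
          · exact hz₃ne h
          rcases adj_vc (hedge_adj hz₃e) with h3 | h3 | ⟨i', h3⟩ | ⟨jd, h3⟩
          · rw [h3] at hmem
            rcases hFbcases _ hmem with h | h | ⟨i', h⟩ <;> simp [va, vb, vr] at h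
          · rw [h3] at hmem
            rcases hFbcases _ hmem with h | h | ⟨i', h⟩ <;> simp [va, vb, vr] at h
          · rw [h3] at hmem
            rcases hFbcases _ hmem with h | h | ⟨i'', h⟩ <;> simp [va, vc, vr] at h
          · exact hD jd (h3 ▸ hz₃mem)
        have hvcnotin : vc i ∉ insert (vb m) Fb := by
          intro hmem
          rcases Finset.mem_insert.mp hmem with h | hmem
          · simp [vb, vc] at h
          · rcases hFbcases _ hmem with h | h | ⟨i', h⟩ <;> simp [va, vc, vr] at h
        have hsub : insert z₃ (insert (vc i) (insert (vb m) Fb)) ⊆ c.support.toFinset := by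
          intro x hx
          rcases Finset.mem_insert.mp hx with rfl | hx
          · exact List.mem_toFinset.mpr hz₃mem
          rcases Finset.mem_insert.mp hx with rfl | hx
          · exact List.mem_toFinset.mpr hvci
          rcases Finset.mem_insert.mp hx with rfl | hx
          · exact List.mem_toFinset.mpr hbm
          rcases hFbcases _ hx with rfl | rfl | ⟨i', rfl⟩
          · exact List.mem_toFinset.mpr ha0
          · exact List.mem_toFinset.mpr ha1
          · exact List.mem_toFinset.mpr (hallα i'.val i'.isLt)
        have hcard := Finset.card_le_card hsub
        rw [hScard, Finset.card_insert_of_notMem hz₃notin,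
          Finset.card_insert_of_notMem hvcnotin,
          Finset.card_insert_of_notMem (hbnotin m), hFbcard] at hcard
        omega
    -- classify the second neighbour of a₁
    rcases adj_va0 (hedge_adj hz₀e) with h0 | h0 | h0 | ⟨β, i, hi0, h0⟩
    · -- z₀ = a₂ : the 4-cycle a₁ a₂ case
      have hz1 : z₁ = va 0 := by
        have he : s(va 1, va 0) ∈ c.edges := by
          rw [h0] at hz₀e; rwa [Sym2.eq_swap] at hz₀e
        rcases hu1 _ he with hbad | hgood
        · exfalso; simp [va, vr] at hbad
        · exact hgood.symm
      have hcl : ∀ u ∈ Fb, ∀ x, s(u, x) ∈ c.edges → x ∈ Fb := by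
        intro u hu x hx
        rcases hFbcases u hu with rfl | rfl | ⟨i, rfl⟩
        · rcases hu0 x hx with rfl | rfl
          · exact hmr _
          · rw [h0]; exact hm1
        · rcases hu1 x hx with rfl | rfl
          · exact hmr _
          · rw [hz1]; exact hm0
        · rcases hvr_closed i x hx with rfl | rfl | ⟨i', rfl⟩
          · exact hm0
          · exact hm1
          · exact hmr _
      have hcard := Finset.card_le_card (hclosure Fb hm0 hcl)
      rw [hScard, hFbcard] at hcard
      omega
    · exact hmain 0 h0
    · exact hmain 1 h0
    · -- z₀ on a second path : impossible
      by_cases hβ : β = α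
      · subst hβ
        exact hz₀ne (by rw [h0]; exact congrArg (vr β) (Fin.ext hi0))
      · exact htwoR β hβ ⟨i, h0 ▸ c.snd_mem_support_of_mem_edges hz₀e⟩
  · -- case 1 : the cycle avoids all R paths, so it lives on ≤ k-1 vertices
    push_neg at hR
    have hsub : c.support.toFinset ⊆
        ((Finset.univ.image (va (k := k) (r := r) (t := t)) ∪ Finset.univ.image vb) ∪
          Finset.univ.image vc) := by
      intro x hx
      rw [List.mem_toFinset] at hx
      simp only [Finset.mem_union, Finset.mem_image, Finset.mem_univ, true_and]
      rcases x with ((i|i)|((i|i)|⟨β,i⟩))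
      · exact Or.inl (Or.inl ⟨i, rfl⟩)
      · exact Or.inl (Or.inr ⟨i, rfl⟩)
      · exact Or.inr ⟨i, rfl⟩
      · exact absurd hx (hD i)
      · exact absurd hx (hR β i)
    have hcard := Finset.card_le_card hsub
    rw [hScard] at hcard
    have h1 := Finset.card_union_le
      ((Finset.univ.image (va (k := k) (r := r) (t := t)) ∪ Finset.univ.image vb))
      (Finset.univ.image (vc (k := k) (r := r) (t := t)))
    have h2 := Finset.card_union_le
      (Finset.univ.image (va (k := k) (r := r) (t := t)))
      (Finset.univ.image (vb (k := k) (r := r) (t := t)))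
    have h3 := Finset.card_image_le (s := (Finset.univ : Finset (Fin 2)))
      (f := va (k := k) (r := r) (t := t))
    have h4 := Finset.card_image_le (s := (Finset.univ : Finset (Fin 2)))
      (f := vb (k := k) (r := r) (t := t))
    have h5 := Finset.card_image_le (s := (Finset.univ : Finset (Fin (k-5))))
      (f := vc (k := k) (r := r) (t := t))
    simp only [Finset.card_univ, Fintype.card_fin] at h3 h4 h5
    omega
end

section
/- In the graph H_{k,n} (k ≥ 7), the vertices a₁ and a₂ are connected inside Q = A ∪ B ∪ C ∪ D by a path of length ℓ for every ℓ ∈ {1, 2, 4, 5, ..., k−2}, i.e., for every 1 ≤ ℓ ≤ k−2 with ℓ ≠ 3. -/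
open SimpleGraph

/-- The vertices `b₁, b₂`. -/
def bVtx (k r t : ℕ) (i : Fin 2) : HVtx k r t := Sum.inl (Sum.inr i)

/-- The vertex `cᵢ`. -/
def cVtx (k r t : ℕ) (i : ℕ) (hi : i < k - 5) : HVtx k r t :=
  Sum.inr (Sum.inl (Sum.inl ⟨i, hi⟩))

lemma adj_aa (k r t : ℕ) : (Hgraph k r t).Adj (aVtx k r t 0) (aVtx k r t 1) := by
  rw [Hgraph, SimpleGraph.fromRel_adj]
  exact ⟨by simp [aVtx], Or.inl (by simp [aVtx, HRel])⟩

lemma adj_ab (k r t : ℕ) (i j : Fin 2) :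
    (Hgraph k r t).Adj (aVtx k r t i) (bVtx k r t j) := by
  rw [Hgraph, SimpleGraph.fromRel_adj]
  exact ⟨by simp [aVtx, bVtx], Or.inl trivial⟩

lemma adj_bc (k r t : ℕ) (i : Fin 2) (j : ℕ) (hj : j < k - 5) :
    (Hgraph k r t).Adj (bVtx k r t i) (cVtx k r t j hj) := by
  rw [Hgraph, SimpleGraph.fromRel_adj]
  exact ⟨by simp [bVtx, cVtx], Or.inl trivial⟩

lemma adj_cc (k r t : ℕ) (i j : ℕ) (hi : i < k - 5) (hj : j < k - 5) (hne : i ≠ j) :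
    (Hgraph k r t).Adj (cVtx k r t i hi) (cVtx k r t j hj) := by
  rw [Hgraph, SimpleGraph.fromRel_adj]
  refine ⟨by simp [cVtx, Fin.mk.injEq, hne], Or.inl ?_⟩
  show (⟨i, hi⟩ : Fin (k - 5)) ≠ ⟨j, hj⟩
  simp [Fin.mk.injEq, hne]

/-- Walk `cᵢ cᵢ₊₁ ⋯ cᵢ₊ₙ b₂ a₂`. -/
def cW (k r t : ℕ) : (n : ℕ) → (i : ℕ) → (h : i + n < k - 5) →
    (Hgraph k r t).Walk (cVtx k r t i (by omega)) (aVtx k r t 1)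
  | 0, i, h =>
      .cons (adj_bc k r t 1 i (by omega)).symm (.cons (adj_ab k r t 1 1).symm .nil)
  | n + 1, i, h =>
      .cons (adj_cc k r t i (i + 1) (by omega) (by omega) (by omega))
        (cW k r t n (i + 1) (by omega))

lemma cW_length (k r t : ℕ) : ∀ (n i : ℕ) (h : i + n < k - 5),
    (cW k r t n i h).length = n + 2 := by
  intro n
  induction n with
  | zero => intro i h; simp [cW]
  | succ n ih => intro i h; simp [cW, ih]

lemma cW_support (k r t : ℕ) : ∀ (n i : ℕ) (h : i + n < k - 5),
    ∀ x ∈ (cW k r t n i h).support,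
      x = bVtx k r t 1 ∨ x = aVtx k r t 1 ∨
        ∃ j : ℕ, i ≤ j ∧ j ≤ i + n ∧ ∃ hj : j < k - 5, x = cVtx k r t j hj := by
  intro n
  induction n with
  | zero =>
    intro i h x hx
    simp only [cW, Walk.support_cons, Walk.support_nil, List.mem_cons,
      List.mem_singleton] at hx
    rcases hx with rfl | rfl | rfl | hx
    · exact Or.inr (Or.inr ⟨i, le_refl _, by omega, by omega, rfl⟩)
    · exact Or.inl rfl
    · exact Or.inr (Or.inl rfl)
    · simp at hx
  | succ n ih =>
    intro i h x hx
    simp only [cW, Walk.support_cons, List.mem_cons] at hx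
    rcases hx with rfl | hx
    · exact Or.inr (Or.inr ⟨i, le_refl _, by omega, by omega, rfl⟩)
    · rcases ih (i + 1) (by omega) x hx with h1 | h2 | ⟨j, hj1, hj2, hj3, rfl⟩
      · exact Or.inl h1
      · exact Or.inr (Or.inl h2)
      · exact Or.inr (Or.inr ⟨j, by omega, by omega, hj3, rfl⟩)

lemma cW_isPath (k r t : ℕ) : ∀ (n i : ℕ) (h : i + n < k - 5),
    (cW k r t n i h).IsPath := by
  intro n
  induction n with
  | zero =>
    intro i h
    simp only [cW, Walk.isPath_def, Walk.support_cons, Walk.support_nil]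
    simp [cVtx, bVtx, aVtx]
  | succ n ih =>
    intro i h
    refine ((ih (i + 1) (by omega)).cons ?_)
    intro hmem
    rcases cW_support k r t n (i + 1) (by omega) _ hmem with h1 | h2 | ⟨j, hj1, hj2, hj3, hj4⟩
    · simp [cVtx, bVtx] at h1
    · simp [cVtx, aVtx] at h2
    · simp only [cVtx, Sum.inr.injEq, Sum.inl.injEq, Fin.mk.injEq] at hj4
      omega

theorem stmt_16 (k r t : ℕ) (hk : 7 ≤ k) (hr : r ≤ k - 5)
    (ℓ : ℕ) (h1 : 1 ≤ ℓ) (h2 : ℓ ≤ k - 2) (h3 : ℓ ≠ 3) :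
    ∃ p : (Hgraph k r t).Walk (aVtx k r t 0) (aVtx k r t 1),
      p.IsPath ∧ p.length = ℓ ∧
      -- the path stays inside Q = A ∪ B ∪ C ∪ D, i.e. avoids all the R_α
      ∀ (α : Fin t) (j : Fin (k - 4)),
        (Sum.inr (Sum.inr (α, j)) : HVtx k r t) ∉ p.support := by
  rcases eq_or_ne ℓ 1 with rfl | hℓ1
  · refine ⟨.cons (adj_aa k r t) .nil, ?_, by simp, ?_⟩
    · simp only [Walk.isPath_def, Walk.support_cons, Walk.support_nil]
      simp [aVtx]
    · intro α j
      simp only [Walk.support_cons, Walk.support_nil]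
      simp [aVtx]
  rcases eq_or_ne ℓ 2 with rfl | hℓ2
  · refine ⟨.cons (adj_ab k r t 0 0) (.cons (adj_ab k r t 1 0).symm .nil), ?_, by simp, ?_⟩
    · simp only [Walk.isPath_def, Walk.support_cons, Walk.support_nil]
      simp [aVtx, bVtx]
    · intro α j
      simp only [Walk.support_cons, Walk.support_nil]
      simp [aVtx, bVtx]
  -- now ℓ ≥ 4
  have hℓ4 : 4 ≤ ℓ := by omega
  have hclt : 0 + (ℓ - 4) < k - 5 := by omega
  refine ⟨.cons (adj_ab k r t 0 0)
      (.cons (adj_bc k r t 0 0 (by omega)) (cW k r t (ℓ - 4) 0 hclt)), ?_, ?_, ?_⟩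
  · have hb0 : (bVtx k r t 0 : HVtx k r t) ∉ (cW k r t (ℓ - 4) 0 hclt).support := by
      intro hmem
      rcases cW_support k r t (ℓ - 4) 0 hclt _ hmem with h1 | h2 | ⟨j, _, _, hj3, hj4⟩
      · simp [bVtx] at h1
      · simp [bVtx, aVtx] at h2
      · simp [bVtx, cVtx] at hj4
    have ha0 : (aVtx k r t 0 : HVtx k r t) ∉ (cW k r t (ℓ - 4) 0 hclt).support := by
      intro hmem
      rcases cW_support k r t (ℓ - 4) 0 hclt _ hmem with h1 | h2 | ⟨j, _, _, hj3, hj4⟩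
      · simp [bVtx, aVtx] at h1
      · simp [aVtx] at h2
      · simp [aVtx, cVtx] at hj4
    refine (((cW_isPath k r t (ℓ - 4) 0 hclt).cons hb0).cons ?_)
    simp only [Walk.support_cons, List.mem_cons]
    push_neg
    exact ⟨by simp [aVtx, bVtx], ha0⟩
  · simp [cW_length, Walk.length_cons]
    omega
  · intro α j
    simp only [Walk.support_cons, List.mem_cons]
    push_neg
    refine ⟨by simp [aVtx], by simp [bVtx], ?_⟩
    intro hmem
    rcases cW_support k r t (ℓ - 4) 0 hclt _ hmem with h1 | h2 | ⟨j', _, _, hj3, hj4⟩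
    · simp [bVtx] at h1
    · simp [aVtx] at h2
    · simp [cVtx] at hj4
end
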